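/- arXiv:2212.13719 — 3 statements merged into one kernel-verified Lean document; each statement's English description precedes it below -/
import Mathlib

section
/- Let n be an even positive integer, let r and s be integers with 2 ≤ r ≤ s ≤ 2r−1, and let m = s−r+1. Then τ(n, P^{(r)}_s) ≤ τ(n, LP^{(r)}_s) ≤ 2·h(n,r,m) + h(n,r−1,m). -/
open Finset
open scoped Classical

/-- Edge set of the natural tight path `P^{(r)}_s` on vertex set `[s] = {1,…,s}`:
all intervals of `r` consecutive integers. -/
def pathEdges (r s : ℕ) : Finset (Finset ℕ) :=
  (Finset.Icc 1 (s - r + 1)).image (fun i => Finset.Icc i (i + r - 1))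

/-- Edge set of the loose path `LP^{(r)}_s`: only the first and last edges. -/
def loosePathEdges (r s : ℕ) : Finset (Finset ℕ) :=
  {Finset.Icc 1 r, Finset.Icc (s - r + 1) s}

/-- `C` is the edge set of a copy in `K^{(r)}_n` of the ordered hypergraph with
vertex set `[s]` and edge set `E`, i.e. the image of `E` under a strictly
increasing map `[s] → [n]`. -/
def IsCopy (n s : ℕ) (E : Finset (Finset ℕ)) (C : Finset (Finset ℕ)) : Prop :=
  ∃ f : ℕ → ℕ, StrictMonoOn f ↑(Finset.Icc 1 s) ∧
    (∀ v ∈ Finset.Icc 1 s, f v ∈ Finset.Icc 1 n) ∧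
    C = E.image (fun e => e.image f)

/-- A transversal: a set `T` of `r`-element subsets of `[n]` meeting every copy. -/
def IsTransversal (n r s : ℕ) (E : Finset (Finset ℕ)) (T : Finset (Finset ℕ)) : Prop :=
  T ⊆ (Finset.Icc 1 n).powersetCard r ∧
  ∀ C : Finset (Finset ℕ), IsCopy n s E C → ∃ e ∈ C, e ∈ T

/-- The transversal number `τ(n,H)`. -/
noncomputable def tau (n r s : ℕ) (E : Finset (Finset ℕ)) : ℕ :=
  sInf {m | ∃ T : Finset (Finset ℕ), IsTransversal n r s E T ∧ T.card = m}

/-- A packing: an edge-disjoint family of copies. -/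
def IsPacking (n s : ℕ) (E : Finset (Finset ℕ)) (P : Finset (Finset (Finset ℕ))) : Prop :=
  (∀ C ∈ P, IsCopy n s E C) ∧
  ∀ C ∈ P, ∀ C' ∈ P, C ≠ C' → Disjoint C C'

/-- The packing number `ν(n,H)`. -/
noncomputable def nu (n s : ℕ) (E : Finset (Finset ℕ)) : ℕ :=
  sSup {m | ∃ P : Finset (Finset (Finset ℕ)), IsPacking n s E P ∧ P.card = m}

/-- The ordered Turán number: maximum number of edges of a subgraph of
`K^{(r)}_n` containing no copy of the hypergraph with edge set `E`. -/
noncomputable def exNum (n r s : ℕ) (E : Finset (Finset ℕ)) : ℕ :=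
  sSup {m | ∃ G ⊆ (Finset.Icc 1 n).powersetCard r,
    (∀ C : Finset (Finset ℕ), IsCopy n s E C → ¬ C ⊆ G) ∧ G.card = m}

/-- `S ⊆ [n]` is `m`-left-biased. -/
def LeftBiased (n m : ℕ) (S : Finset ℕ) : Prop :=
  ∃ u ≤ n / 2, (S ∩ Finset.Icc 1 u).card = m ∧ S ∩ Finset.Icc (n + 1 - u) n = ∅

/-- `h(n,t,m)`: the number of `m`-left-biased `t`-element subsets of `[n]`. -/
noncomputable def hcount (n t m : ℕ) : ℕ :=
  (((Finset.Icc 1 n).powersetCard t).filter (LeftBiased n m)).card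

/-- A fractional transversal. -/
def IsFracTransversal (n r s : ℕ) (E : Finset (Finset ℕ)) (w : Finset ℕ → ℝ) : Prop :=
  (∀ e ∈ (Finset.Icc 1 n).powersetCard r, 0 ≤ w e) ∧
  ∀ C : Finset (Finset ℕ), IsCopy n s E C → 1 ≤ ∑ e ∈ C, w e

/-- The fractional transversal number `τ*(n,H)`. -/
noncomputable def tauStar (n r s : ℕ) (E : Finset (Finset ℕ)) : ℝ :=
  sInf {x : ℝ | ∃ w : Finset ℕ → ℝ, IsFracTransversal n r s E w ∧
    x = ∑ e ∈ (Finset.Icc 1 n).powersetCard r, w e}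

/-- A `k`-edge-labeling of the ordered complete graph on `[n]`. -/
def IsLabeling (n k : ℕ) (φ : ℕ → ℕ → ℕ) : Prop :=
  ∀ u v : ℕ, u ∈ Finset.Icc 1 n → v ∈ Finset.Icc 1 n → u < v → φ u v ∈ Finset.Icc 1 k

/-- The number of good triples `u < v < w` in `[n]` (those with `φ(uv) < φ(vw)`). -/
def goodCount (n : ℕ) (φ : ℕ → ℕ → ℕ) : ℕ :=
  (((Finset.Icc 1 n) ×ˢ (Finset.Icc 1 n) ×ˢ (Finset.Icc 1 n)).filter
    (fun p => p.1 < p.2.1 ∧ p.2.1 < p.2.2 ∧ φ p.1 p.2.1 < φ p.2.1 p.2.2)).card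

/-- The number of bad triples `u < v < w` in `[n]` (those with `φ(uv) ≥ φ(vw)`). -/
def badCount (n : ℕ) (φ : ℕ → ℕ → ℕ) : ℕ :=
  (((Finset.Icc 1 n) ×ˢ (Finset.Icc 1 n) ×ˢ (Finset.Icc 1 n)).filter
    (fun p => p.1 < p.2.1 ∧ p.2.1 < p.2.2 ∧ ¬ φ p.1 p.2.1 < φ p.2.1 p.2.2)).card

/-- `f(n,k)`: the maximum number of good triples over all `k`-edge-labelings of `[n]`. -/
noncomputable def fmax (n k : ℕ) : ℕ :=
  sSup {m | ∃ φ : ℕ → ℕ → ℕ, IsLabeling n k φ ∧ goodCount n φ = m}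

/-- A labeling is monotone if `φ(uv) ≤ φ(vw)` whenever `u < v < w` in `[n]`. -/
def IsMonotone (n : ℕ) (φ : ℕ → ℕ → ℕ) : Prop :=
  ∀ u v w : ℕ, u ∈ Finset.Icc 1 n → v ∈ Finset.Icc 1 n → w ∈ Finset.Icc 1 n →
    u < v → v < w → φ u v ≤ φ v w

/-- `Φ_L(v) = max{φ(uv) : u < v}`, with `Φ_L(1) = 0`. -/
def PhiL (φ : ℕ → ℕ → ℕ) (v : ℕ) : ℕ := (Finset.Ico 1 v).sup (fun u => φ u v)

/-- `Φ_R(v) = min{φ(vw) : v < w ≤ n}`, with `Φ_R(n) = k+1`. -/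
noncomputable def PhiR (n k : ℕ) (φ : ℕ → ℕ → ℕ) (v : ℕ) : ℕ :=
  if v = n then k + 1 else sInf {m | ∃ w ∈ Finset.Ioc v n, φ v w = m}

/-- `X_i = {v ∈ [n] : Φ_L(v) = i}`. -/
def XL (n : ℕ) (φ : ℕ → ℕ → ℕ) (i : ℕ) : Finset ℕ :=
  (Finset.Icc 1 n).filter (fun v => PhiL φ v = i)

/-- `X̂_i = {v ∈ [n] : Φ_R(v) = i}`. -/
noncomputable def XR (n k : ℕ) (φ : ℕ → ℕ → ℕ) (i : ℕ) : Finset ℕ :=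
  (Finset.Icc 1 n).filter (fun v => PhiR n k φ v = i)


namespace Stmt0Aux

open Finset

noncomputable def Lset (n r m : ℕ) : Finset (Finset ℕ) :=
  ((Finset.Icc 1 n).powersetCard r).filter (LeftBiased n m)

noncomputable def Rset (n r m : ℕ) : Finset (Finset ℕ) :=
  ((Finset.Icc 1 n).powersetCard r).filter
    (fun B => LeftBiased n m (B.image (fun b => n + 1 - b)))

noncomputable def Mset (n r m : ℕ) : Finset (Finset ℕ) :=
  ((Finset.Icc 1 n).powersetCard r).filter
    (fun A => ∃ x ∈ A, ∃ y ∈ A, (A ∩ Finset.Icc 1 x).card = m ∧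
      (∀ a ∈ A, a ≤ y) ∧ x + y = n + 1)

lemma Lcard (n r m : ℕ) : (Lset n r m).card = hcount n r m := rfl

lemma refl_refl {n : ℕ} {S : Finset ℕ} (hS : S ⊆ Finset.Icc 1 n) :
    (S.image (fun b => n + 1 - b)).image (fun b => n + 1 - b) = S := by
  rw [Finset.image_image]
  have h : Set.EqOn ((fun b => n + 1 - b) ∘ (fun b => n + 1 - b)) id ↑S := by
    intro a ha
    have := hS (Finset.mem_coe.1 ha)
    simp only [Finset.mem_Icc] at this
    simp only [Function.comp_apply, id_eq]
    omega
  rw [Finset.image_congr h, Finset.image_id]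

lemma Rcard (n r m : ℕ) : (Rset n r m).card ≤ hcount n r m := by
  classical
  show (Rset n r m).card ≤ (((Finset.Icc 1 n).powersetCard r).filter (LeftBiased n m)).card
  apply Finset.card_le_card_of_injOn (fun B => B.image (fun b => n + 1 - b))
  · intro B hB
    simp only [Finset.mem_coe, Rset, Finset.mem_filter, Finset.mem_powersetCard] at hB
    obtain ⟨⟨hsub, hcard⟩, hlb⟩ := hB
    simp only [Finset.mem_coe, Finset.mem_filter, Finset.mem_powersetCard]
    refine ⟨⟨?_, ?_⟩, hlb⟩
    · intro a ha
      obtain ⟨b, hb, rfl⟩ := Finset.mem_image.1 ha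
      have := hsub hb
      simp only [Finset.mem_Icc] at this
      show n + 1 - b ∈ Finset.Icc 1 n
      simp only [Finset.mem_Icc]
      omega
    · rw [Finset.card_image_of_injOn, hcard]
      intro a ha b hb hab
      have h1 := hsub (Finset.mem_coe.1 ha)
      have h2 := hsub (Finset.mem_coe.1 hb)
      simp only [Finset.mem_Icc] at h1 h2
      have hab' : n + 1 - a = n + 1 - b := hab
      omega
  · intro B hB B' hB' h
    simp only [Finset.mem_coe, Rset, Finset.mem_filter, Finset.mem_powersetCard] at hB hB'
    have := congrArg (fun S => S.image (fun b => n + 1 - b)) h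
    simp only at this
    rwa [refl_refl hB.1.1, refl_refl hB'.1.1] at this

lemma cut_lt {S : Finset ℕ} {x x' m : ℕ} (hx' : x' ∈ S) (hx'1 : 1 ≤ x')
    (h : x < x') (h1 : (S ∩ Finset.Icc 1 x).card = m)
    (h2 : (S ∩ Finset.Icc 1 x').card = m) : False := by
  have hsub : insert x' (S ∩ Finset.Icc 1 x) ⊆ S ∩ Finset.Icc 1 x' := by
    intro a ha
    rcases Finset.mem_insert.1 ha with rfl | ha
    · exact Finset.mem_inter.2 ⟨hx', Finset.mem_Icc.2 ⟨hx'1, le_refl _⟩⟩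
    · obtain ⟨h3, h4⟩ := Finset.mem_inter.1 ha
      simp only [Finset.mem_Icc] at h4
      exact Finset.mem_inter.2 ⟨h3, Finset.mem_Icc.2 ⟨h4.1, by omega⟩⟩
  have hnot : x' ∉ S ∩ Finset.Icc 1 x := by
    intro hc
    have := (Finset.mem_Icc.1 (Finset.mem_inter.1 hc).2).2
    omega
  have hle := Finset.card_le_card hsub
  rw [Finset.card_insert_of_notMem hnot, h1, h2] at hle
  omega

lemma Mset_facts {n r m : ℕ} (hev : Even n) {A : Finset ℕ}
    (hA : A ∈ Mset n r m) :
    ∃ x y, x ∈ A ∧ y ∈ A ∧ x < y ∧ x + y = n + 1 ∧ 1 ≤ x ∧ x ≤ n ∧ y ≤ n ∧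
      (A ∩ Finset.Icc 1 x).card = m ∧ (∀ a ∈ A, a ≤ y) ∧
      A.filter (fun a => ∃ b ∈ A, a < b) = A.erase y := by
  classical
  simp only [Mset, Finset.mem_filter, Finset.mem_powersetCard] at hA
  obtain ⟨⟨hsub, hcard⟩, x, hxA, y, hyA, hcut, hmax, hsum⟩ := hA
  have hxn := hsub hxA
  have hyn := hsub hyA
  simp only [Finset.mem_Icc] at hxn hyn
  have hxy : x < y := by
    rcases lt_or_ge x y with h | h
    · exact h
    · exfalso
      have hxley : x ≤ y := hmax x hxA
      have : x = y := le_antisymm hxley (by omega)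
      obtain ⟨k, hk⟩ := hev
      omega
  refine ⟨x, y, hxA, hyA, hxy, hsum, hxn.1, hxn.2, hyn.2, hcut, hmax, ?_⟩
  ext a
  simp only [Finset.mem_filter, Finset.mem_erase]
  constructor
  · rintro ⟨haA, b, hbA, hab⟩
    exact ⟨by have := hmax b hbA; omega, haA⟩
  · rintro ⟨hne, haA⟩
    have := hmax a haA
    exact ⟨haA, y, hyA, by omega⟩

lemma Mcard (n r m : ℕ) (hev : Even n) (hr : 1 ≤ r) :
    (Mset n r m).card ≤ hcount n (r - 1) m := by
  classical
  show (Mset n r m).card ≤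
    (((Finset.Icc 1 n).powersetCard (r - 1)).filter (LeftBiased n m)).card
  apply Finset.card_le_card_of_injOn (fun A => A.filter (fun a => ∃ b ∈ A, a < b))
  · intro A hA
    obtain ⟨x, y, hxA, hyA, hxy, hsum, hx1, hxn, hyn, hcut, hmax, hfe⟩ :=
      Mset_facts hev hA
    simp only [Finset.mem_coe, Mset, Finset.mem_filter, Finset.mem_powersetCard] at hA
    obtain ⟨⟨hsub, hcard⟩, -⟩ := hA
    simp only [Finset.mem_coe, Finset.mem_filter, Finset.mem_powersetCard, hfe]
    refine ⟨⟨fun a ha => hsub (Finset.erase_subset _ _ ha), ?_⟩, ?_⟩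
    · rw [Finset.card_erase_of_mem hyA, hcard]
    · refine ⟨x, by omega, ?_, ?_⟩
      · have : A.erase y ∩ Finset.Icc 1 x = A ∩ Finset.Icc 1 x := by
          ext a
          simp only [Finset.mem_inter, Finset.mem_erase, Finset.mem_Icc]
          constructor
          · rintro ⟨⟨-, h1⟩, h2⟩; exact ⟨h1, h2⟩
          · rintro ⟨h1, h2⟩; exact ⟨⟨by omega, h1⟩, h2⟩
        rw [this, hcut]
      · rw [Finset.eq_empty_iff_forall_notMem]
        intro a ha
        obtain ⟨h1, h2⟩ := Finset.mem_inter.1 ha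
        obtain ⟨hne, haA⟩ := Finset.mem_erase.1 h1
        have := hmax a haA
        simp only [Finset.mem_Icc] at h2
        omega
  · intro A hA A' hA' h
    simp only at h
    obtain ⟨x, y, hxA, hyA, hxy, hsum, hx1, hxn, hyn, hcut, hmax, hfe⟩ :=
      Mset_facts hev (Finset.mem_coe.1 hA)
    obtain ⟨x', y', hxA', hyA', hxy', hsum', hx1', hxn', hyn', hcut', hmax', hfe'⟩ :=
      Mset_facts hev (Finset.mem_coe.1 hA')
    rw [hfe, hfe'] at h
    have hxe : x ∈ A.erase y := Finset.mem_erase.2 ⟨by omega, hxA⟩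
    have hxe' : x' ∈ A.erase y := by rw [h]; exact Finset.mem_erase.2 ⟨by omega, hxA'⟩
    have hc1 : (A.erase y ∩ Finset.Icc 1 x).card = m := by
      have he : A.erase y ∩ Finset.Icc 1 x = A ∩ Finset.Icc 1 x := by
        ext a
        simp only [Finset.mem_inter, Finset.mem_erase, Finset.mem_Icc]
        constructor
        · rintro ⟨⟨-, h1⟩, h2⟩; exact ⟨h1, h2⟩
        · rintro ⟨h1, h2⟩; exact ⟨⟨by omega, h1⟩, h2⟩
      rw [he, hcut]
    have hc2 : (A.erase y ∩ Finset.Icc 1 x').card = m := by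
      rw [h]
      have he : A'.erase y' ∩ Finset.Icc 1 x' = A' ∩ Finset.Icc 1 x' := by
        ext a
        simp only [Finset.mem_inter, Finset.mem_erase, Finset.mem_Icc]
        constructor
        · rintro ⟨⟨-, h1⟩, h2⟩; exact ⟨h1, h2⟩
        · rintro ⟨h1, h2⟩; exact ⟨⟨by omega, h1⟩, h2⟩
      rw [he, hcut']
    have hxx : x = x' := by
      rcases lt_trichotomy x x' with hlt | he | hlt
      · exact absurd (cut_lt hxe' (by omega) hlt hc1 hc2) (fun h => h)
      · exact he
      · exact absurd (cut_lt hxe (by omega) hlt hc2 hc1) (fun h => h)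
    have hyy : y = y' := by omega
    calc A = insert y (A.erase y) := (Finset.insert_erase hyA).symm
    _ = insert y' (A'.erase y') := by rw [h, hyy]
    _ = A' := Finset.insert_erase hyA'

lemma cardImage {s a b : ℕ} (f : ℕ → ℕ) (hf : StrictMonoOn f ↑(Finset.Icc 1 s))
    (ha : 1 ≤ a) (hb : b ≤ s) : ((Finset.Icc a b).image f).card = b + 1 - a := by
  rw [Finset.card_image_of_injOn, Nat.card_Icc]
  exact hf.injOn.mono (by
    intro x hx
    simp only [Finset.coe_Icc, Set.mem_Icc] at hx ⊢
    omega)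

lemma transversal (n r s m : ℕ) (hev : Even n) (hr : 2 ≤ r) (hrs : r ≤ s)
    (hs : s ≤ 2 * r - 1) (hm : m = s - r + 1) :
    IsTransversal n r s (loosePathEdges r s)
      (Lset n r m ∪ Rset n r m ∪ Mset n r m) := by
  classical
  constructor
  · intro e he
    simp only [Finset.mem_union, Lset, Rset, Mset, Finset.mem_filter] at he
    rcases he with (h | h) | h <;> exact h.1
  · rintro C ⟨f, hmono, hmap, rfl⟩
    have hm1 : 1 ≤ m := by omega
    have hmr : m ≤ r := by omega
    have hdom : ∀ j, 1 ≤ j → j ≤ s → (j : ℕ) ∈ (↑(Finset.Icc 1 s) : Set ℕ) := by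
      intro j h1 h2
      simp only [Finset.coe_Icc, Set.mem_Icc]
      omega
    have hlt : ∀ i j, 1 ≤ i → i < j → j ≤ s → f i < f j := fun i j h1 h2 h3 =>
      hmono (hdom i h1 (by omega)) (hdom j (by omega) h3) h2
    have hle : ∀ i j, 1 ≤ i → i ≤ j → j ≤ s → f i ≤ f j := by
      intro i j h1 h2 h3
      rcases eq_or_lt_of_le h2 with rfl | h
      · exact le_refl _
      · exact le_of_lt (hlt i j h1 h h3)
    have hbd : ∀ j, 1 ≤ j → j ≤ s → 1 ≤ f j ∧ f j ≤ n := by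
      intro j h1 h2
      exact Finset.mem_Icc.1 (hmap j (Finset.mem_Icc.2 ⟨h1, h2⟩))
    have hAC : (Finset.Icc 1 r).image f ∈
        (loosePathEdges r s).image (fun e => e.image f) := by
      apply Finset.mem_image_of_mem
      simp [loosePathEdges]
    have hBC : (Finset.Icc m s).image f ∈
        (loosePathEdges r s).image (fun e => e.image f) := by
      apply Finset.mem_image_of_mem
      simp only [loosePathEdges, Finset.mem_insert, Finset.mem_singleton]
      right
      rw [hm]
    have hApow : (Finset.Icc 1 r).image f ∈ (Finset.Icc 1 n).powersetCard r := by
      rw [Finset.mem_powersetCard]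
      constructor
      · intro a ha
        obtain ⟨j, hj, rfl⟩ := Finset.mem_image.1 ha
        simp only [Finset.mem_Icc] at hj
        exact hmap j (Finset.mem_Icc.2 ⟨hj.1, by omega⟩)
      · rw [cardImage f hmono le_rfl hrs]
        omega
    have hAinter : ((Finset.Icc 1 r).image f) ∩ Finset.Icc 1 (f m)
        = (Finset.Icc 1 m).image f := by
      ext a
      simp only [Finset.mem_inter, Finset.mem_image, Finset.mem_Icc]
      constructor
      · rintro ⟨⟨j, hj, rfl⟩, h1, h2⟩
        refine ⟨j, ⟨hj.1, ?_⟩, rfl⟩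
        by_contra hc
        exact absurd h2 (not_le.2 (hlt m j hm1 (by omega) (by omega)))
      · rintro ⟨j, hj, rfl⟩
        exact ⟨⟨j, ⟨hj.1, by omega⟩, rfl⟩, (hbd j hj.1 (by omega)).1,
          hle j m hj.1 hj.2 (by omega)⟩
    have hAcount : (((Finset.Icc 1 r).image f) ∩ Finset.Icc 1 (f m)).card = m := by
      rw [hAinter, cardImage f hmono le_rfl (by omega)]
      omega
    have hfm := hbd m hm1 (by omega)
    have hfr := hbd r (by omega) hrs
    have hfmr : f m ≤ f r := hle m r hm1 hmr hrs
    by_cases h1 : f m + f r ≤ n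
    · -- A is left-biased
      refine ⟨(Finset.Icc 1 r).image f, hAC, Finset.mem_union_left _
        (Finset.mem_union_left _ ?_)⟩
      simp only [Lset, Finset.mem_filter]
      refine ⟨hApow, f m, by omega, hAcount, ?_⟩
      rw [Finset.eq_empty_iff_forall_notMem]
      intro a ha
      obtain ⟨h2, h3⟩ := Finset.mem_inter.1 ha
      obtain ⟨j, hj, rfl⟩ := Finset.mem_image.1 h2
      simp only [Finset.mem_Icc] at hj h3
      have := hle j r hj.1 hj.2 hrs
      omega
    · by_cases h2 : f m + f r = n + 1
      · -- A is in the middle set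
        refine ⟨(Finset.Icc 1 r).image f, hAC, Finset.mem_union_right _ ?_⟩
        simp only [Mset, Finset.mem_filter]
        refine ⟨hApow, f m, ?_, f r, ?_, hAcount, ?_, h2⟩
        · exact Finset.mem_image_of_mem f (Finset.mem_Icc.2 ⟨hm1, hmr⟩)
        · exact Finset.mem_image_of_mem f (Finset.mem_Icc.2 ⟨by omega, le_rfl⟩)
        · intro a ha
          obtain ⟨j, hj, rfl⟩ := Finset.mem_image.1 ha
          simp only [Finset.mem_Icc] at hj
          exact hle j r hj.1 hj.2 hrs
      · -- B is right-biased
        have h3 : n + 2 ≤ f m + f r := by omega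
        refine ⟨(Finset.Icc m s).image f, hBC, Finset.mem_union_left _
          (Finset.mem_union_right _ ?_)⟩
        simp only [Rset, Finset.mem_filter]
        obtain ⟨k, hk⟩ := hev
        have hBpow : (Finset.Icc m s).image f ∈ (Finset.Icc 1 n).powersetCard r := by
          rw [Finset.mem_powersetCard]
          constructor
          · intro a ha
            obtain ⟨j, hj, rfl⟩ := Finset.mem_image.1 ha
            simp only [Finset.mem_Icc] at hj
            exact hmap j (Finset.mem_Icc.2 ⟨by omega, hj.2⟩)
          · rw [cardImage f hmono hm1 le_rfl]
            omega
        refine ⟨hBpow, n + 1 - f r, by omega, ?_, ?_⟩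
        · rw [Finset.image_image]
          have hinter : ((Finset.Icc m s).image ((fun b => n + 1 - b) ∘ f))
              ∩ Finset.Icc 1 (n + 1 - f r)
              = (Finset.Icc r s).image ((fun b => n + 1 - b) ∘ f) := by
            ext a
            simp only [Finset.mem_inter, Finset.mem_image, Finset.mem_Icc,
              Function.comp_apply]
            constructor
            · rintro ⟨⟨j, hj, rfl⟩, ha1, ha2⟩
              have hfj := hbd j (by omega) hj.2
              refine ⟨j, ⟨?_, hj.2⟩, rfl⟩
              by_contra hc
              have := hlt j r (by omega) (by omega) hrs
              omega
            · rintro ⟨j, hj, rfl⟩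
              have hfj := hbd j (by omega) hj.2
              have := hle r j (by omega) hj.1 hj.2
              exact ⟨⟨j, ⟨by omega, hj.2⟩, rfl⟩, by omega, by omega⟩
          rw [hinter, Finset.card_image_of_injOn, Nat.card_Icc]
          · omega
          · intro a ha b hb hab
            simp only [Finset.coe_Icc, Set.mem_Icc] at ha hb
            simp only [Function.comp_apply] at hab
            have hfa := hbd a (by omega) ha.2
            have hfb := hbd b (by omega) hb.2
            have : f a = f b := by omega
            exact hmono.injOn (hdom a (by omega) ha.2) (hdom b (by omega) hb.2) this
        · rw [Finset.image_image, Finset.eq_empty_iff_forall_notMem]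
          intro a ha
          obtain ⟨h4, h5⟩ := Finset.mem_inter.1 ha
          obtain ⟨j, hj, rfl⟩ := Finset.mem_image.1 h4
          simp only [Finset.mem_Icc] at hj
          simp only [Function.comp_apply] at h5 ⊢
          simp only [Finset.mem_Icc] at h5
          have hfj := hbd j (by omega) hj.2
          have := hle m j hm1 hj.1 hj.2
          omega

lemma loose_subset_path {r s : ℕ} (hr : 1 ≤ r) (hrs : r ≤ s) :
    loosePathEdges r s ⊆ pathEdges r s := by
  intro e he
  simp only [loosePathEdges, Finset.mem_insert, Finset.mem_singleton] at he
  simp only [pathEdges, Finset.mem_image]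
  rcases he with rfl | rfl
  · exact ⟨1, Finset.mem_Icc.2 ⟨le_rfl, by omega⟩, by congr 1; omega⟩
  · exact ⟨s - r + 1, Finset.mem_Icc.2 ⟨by omega, le_rfl⟩, by congr 1; omega⟩

end Stmt0Aux

/-- For even `n > 0`, `2 ≤ r ≤ s ≤ 2r-1` and `m = s-r+1`,
`τ(n, P^{(r)}_s) ≤ τ(n, LP^{(r)}_s) ≤ 2·h(n,r,m) + h(n,r-1,m)`. -/
theorem stmt0 (n r s m : ℕ) (hn : 0 < n) (hev : Even n)
    (hr : 2 ≤ r) (hrs : r ≤ s) (hs : s ≤ 2 * r - 1) (hm : m = s - r + 1) :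
    tau n r s (pathEdges r s) ≤ tau n r s (loosePathEdges r s) ∧
    tau n r s (loosePathEdges r s) ≤ 2 * hcount n r m + hcount n (r - 1) m := by
  classical
  have hT := Stmt0Aux.transversal n r s m hev hr hrs hs hm
  set T := Stmt0Aux.Lset n r m ∪ Stmt0Aux.Rset n r m ∪ Stmt0Aux.Mset n r m with hTdef
  have hTcard : T.card ≤ 2 * hcount n r m + hcount n (r - 1) m := by
    have c1 := Finset.card_union_le (Stmt0Aux.Lset n r m ∪ Stmt0Aux.Rset n r m)
      (Stmt0Aux.Mset n r m)
    have c2 := Finset.card_union_le (Stmt0Aux.Lset n r m) (Stmt0Aux.Rset n r m)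
    have c3 := Stmt0Aux.Lcard n r m
    have c4 := Stmt0Aux.Rcard n r m
    have c5 := Stmt0Aux.Mcard n r m hev (by omega)
    rw [hTdef]
    omega
  have h2 : tau n r s (loosePathEdges r s) ≤ T.card :=
    Nat.sInf_le ⟨T, hT, rfl⟩
  refine ⟨?_, le_trans h2 hTcard⟩
  have hne : {k | ∃ T' : Finset (Finset ℕ),
      IsTransversal n r s (loosePathEdges r s) T' ∧ T'.card = k}.Nonempty :=
    ⟨T.card, T, hT, rfl⟩
  obtain ⟨T₀, hT₀, hcard⟩ := Nat.sInf_mem hne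
  have htight : IsTransversal n r s (pathEdges r s) T₀ := by
    refine ⟨hT₀.1, ?_⟩
    rintro C ⟨f, hf1, hf2, rfl⟩
    obtain ⟨e, he, heT⟩ := hT₀.2 ((loosePathEdges r s).image (fun e => e.image f))
      ⟨f, hf1, hf2, rfl⟩
    exact ⟨e, Finset.image_subset_image
      (Stmt0Aux.loose_subset_path (by omega) hrs) he, heT⟩
  calc tau n r s (pathEdges r s) ≤ T₀.card := Nat.sInf_le ⟨T₀, htight, rfl⟩
  _ = tau n r s (loosePathEdges r s) := hcard
end

section
/- Let n be an even positive integer, let r and s be integers with 2 ≤ r ≤ s ≤ 2r−1, and let m = s−r+1. Then ν(n, P^{(r)}_s) ≥ 2·h(n,r,m) + h(n,r−1,m). -/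
open Finset
open scoped Classical

/-- 1-indexed sorted enumeration of a finset. -/
noncomputable def sig (S : Finset ℕ) (v : ℕ) : ℕ := (S.sort (· ≤ ·)).getD (v - 1) 0

lemma length_sort' (S : Finset ℕ) {t : ℕ} (ht : S.card = t) :
    (S.sort (· ≤ ·)).length = t := by rw [Finset.length_sort]; exact ht

lemma sig_eq_get (S : Finset ℕ) {v : ℕ} (h : v - 1 < (S.sort (· ≤ ·)).length) :
    sig S v = (S.sort (· ≤ ·))[v - 1] := by
  rw [sig, List.getD_eq_getElem?_getD, List.getElem?_eq_getElem h, Option.getD_some]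

lemma sig_strictMonoOn (S : Finset ℕ) {t : ℕ} (ht : S.card = t) :
    StrictMonoOn (sig S) (Finset.Icc 1 t) := by
  intro a ha b hb hab
  simp only [coe_Icc, Set.mem_Icc] at ha hb
  have hl := length_sort' S ht
  have h1 : a - 1 < (S.sort (· ≤ ·)).length := by omega
  have h2 : b - 1 < (S.sort (· ≤ ·)).length := by omega
  rw [sig_eq_get S h1, sig_eq_get S h2]
  have := (S.sortedLT_sort).strictMono_get
    (a := ⟨a - 1, h1⟩) (b := ⟨b - 1, h2⟩) (by simp [Fin.lt_def]; omega)
  simpa [List.get_eq_getElem] using this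

lemma sig_mem (S : Finset ℕ) {t : ℕ} (ht : S.card = t) {v : ℕ} (hv : v ∈ Finset.Icc 1 t) :
    sig S v ∈ S := by
  simp only [mem_Icc] at hv
  have hl := length_sort' S ht
  have h1 : v - 1 < (S.sort (· ≤ ·)).length := by omega
  rw [sig_eq_get S h1]
  exact (S.mem_sort _).mp (List.getElem_mem _)

lemma sig_image (S : Finset ℕ) {t : ℕ} (ht : S.card = t) :
    (Finset.Icc 1 t).image (sig S) = S := by
  apply Finset.Subset.antisymm
  · intro x hx
    obtain ⟨v, hv, rfl⟩ := Finset.mem_image.mp hx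
    exact sig_mem S ht hv
  · intro x hx
    have hl := length_sort' S ht
    have hx' : x ∈ S.sort (· ≤ ·) := (Finset.mem_sort (α := ℕ) (· ≤ ·)).mpr hx
    obtain ⟨⟨i, hi⟩, hget⟩ := List.mem_iff_get.mp hx'
    refine Finset.mem_image.mpr ⟨i + 1, ?_, ?_⟩
    · simp only [mem_Icc]; omega
    · rw [sig_eq_get S (by omega)]
      simpa [List.get_eq_getElem] using hget

/-- Extraction of the sorted characterization from `LeftBiased`. -/
lemma biased_facts {n m t : ℕ} {S : Finset ℕ} (hm : 1 ≤ m)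
    (hSn : S ⊆ Finset.Icc 1 n) (ht : S.card = t) (hb : LeftBiased n m S) :
    m ≤ t ∧ sig S m ≤ n / 2 ∧ sig S m + sig S t ≤ n := by
  obtain ⟨u, hu, hcard, hempty⟩ := hb
  have hmt : m ≤ t := by
    rw [← hcard, ← ht]; exact card_le_card (inter_subset_left)
  have ht1 : 1 ≤ t := le_trans hm hmt
  have hmono := sig_strictMonoOn S ht
  -- σ m ≤ u
  have hsm : sig S m ≤ u := by
    by_contra hgt
    push_neg at hgt
    have hsub : S ∩ Finset.Icc 1 u ⊆ (Finset.Icc 1 (m - 1)).image (sig S) := by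
      intro x hx
      obtain ⟨hxS, hxu⟩ := mem_inter.mp hx
      simp only [mem_Icc] at hxu
      have : x ∈ (Finset.Icc 1 t).image (sig S) := by rw [sig_image S ht]; exact hxS
      obtain ⟨v, hv, rfl⟩ := Finset.mem_image.mp this
      simp only [mem_Icc] at hv
      by_cases hvm : m ≤ v
      · exfalso
        have : sig S m ≤ sig S v := by
          rcases eq_or_lt_of_le hvm with h | h
          · rw [h]
          · exact le_of_lt (hmono (by simp [mem_Icc]; omega) (by simp [mem_Icc]; omega) h)
        omega
      · exact Finset.mem_image.mpr ⟨v, by simp [mem_Icc]; omega, rfl⟩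
    have := card_le_card hsub
    have := Finset.card_image_le (s := Finset.Icc 1 (m - 1)) (f := sig S)
    have hcc : (Finset.Icc 1 (m - 1)).card = m - 1 := by rw [Nat.card_Icc]; omega
    omega
  -- σ t ≤ n - u
  have hst : sig S t ≤ n - u := by
    have hmem : sig S t ∈ S := sig_mem S ht (by simp [mem_Icc]; omega)
    have hn : sig S t ≤ n := by
      have := hSn hmem; simp only [mem_Icc] at this; omega
    by_contra hgt
    push_neg at hgt
    have : sig S t ∈ S ∩ Finset.Icc (n + 1 - u) n := by
      rw [mem_inter]; exact ⟨hmem, by simp [mem_Icc]; omega⟩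
    rw [hempty] at this
    exact absurd this (Finset.notMem_empty _)
  refine ⟨hmt, le_trans hsm hu, ?_⟩
  have hun : u ≤ n := le_trans hu (Nat.div_le_self _ _)
  omega

/-- σ values are in [1,n]. -/
lemma sig_bounds {n t : ℕ} {S : Finset ℕ} (hSn : S ⊆ Finset.Icc 1 n) (ht : S.card = t)
    {v : ℕ} (hv : v ∈ Finset.Icc 1 t) : 1 ≤ sig S v ∧ sig S v ≤ n := by
  have := hSn (sig_mem S ht hv); simp only [mem_Icc] at this; exact this

/-- Gap lemma for strictly monotone ℕ functions on an interval. -/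
lemma gap_lemma {f : ℕ → ℕ} {t : ℕ} (hf : StrictMonoOn f (Finset.Icc 1 t)) :
    ∀ d a, 1 ≤ a → a + d ≤ t → f a + d ≤ f (a + d) := by
  intro d
  induction d with
  | zero => intro a _ _; simp
  | succ d ih =>
    intro a ha had
    have h1 := ih a ha (by omega)
    have h2 : f (a + d) < f (a + d + 1) := by
      apply hf (by simp [mem_Icc]; omega) (by simp [mem_Icc]; omega) (by omega)
    have h3 : a + (d + 1) = a + d + 1 := by omega
    rw [h3]; omega

lemma gap_lemma' {f : ℕ → ℕ} {t : ℕ} (hf : StrictMonoOn f (Finset.Icc 1 t))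
    {a b : ℕ} (ha : 1 ≤ a) (hb : b ≤ t) (hab : a ≤ b) : f a + (b - a) ≤ f b := by
  have := gap_lemma hf (b - a) a ha (by omega)
  have : f a + (b - a) ≤ f (a + (b - a)) := this
  rwa [Nat.add_sub_cancel' hab] at this

/-- piecewise vertex map -/
def vmap (t D : ℕ) (f : ℕ → ℕ) (v : ℕ) : ℕ := if v ≤ t then f v else f (v - t) + D

lemma vmap_low {t D v : ℕ} (f : ℕ → ℕ) (h : v ≤ t) : vmap t D f v = f v := if_pos h
lemma vmap_high {t D v : ℕ} (f : ℕ → ℕ) (h : t < v) : vmap t D f v = f (v - t) + D :=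
  if_neg (by omega)

/-- Key pointwise lemma: equal images of intervals under strictly monotone maps. -/
lemma image_Icc_pointwise {f g : ℕ → ℕ} {a c d : ℕ}
    (hf : StrictMonoOn f (Finset.Icc a (a + d)))
    (hg : StrictMonoOn g (Finset.Icc c (c + d)))
    (h : (Finset.Icc a (a + d)).image f = (Finset.Icc c (c + d)).image g) :
    ∀ k ≤ d, f (a + k) = g (c + k) := by
  intro k hk
  have hfi : Set.InjOn f (Finset.Icc a (a + d)) := hf.injOn
  have hcard : ((Finset.Icc a (a + d)).image f).card = d + 1 := by
    rw [Finset.card_image_of_injOn hfi, Nat.card_Icc]; omega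
  have hcard' : ((Finset.Icc c (c + d)).image g).card = d + 1 := by rw [← h]; exact hcard
  set T := (Finset.Icc a (a + d)).image f with hT
  have hFmem : ∀ x : Fin (d + 1), f (a + (x : ℕ)) ∈ T :=
    fun x => Finset.mem_image_of_mem f (by simp [mem_Icc]; omega)
  have hFmono : StrictMono (fun x : Fin (d + 1) => f (a + (x : ℕ))) := by
    intro x y hxy
    exact hf (by simp [mem_Icc]; omega) (by simp [mem_Icc]; omega) (by omega)
  have hGmem : ∀ x : Fin (d + 1), g (c + (x : ℕ)) ∈ T := by
    intro x; rw [h]; exact Finset.mem_image_of_mem g (by simp [mem_Icc]; omega)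
  have hGmono : StrictMono (fun x : Fin (d + 1) => g (c + (x : ℕ))) := by
    intro x y hxy
    exact hg (by simp [mem_Icc]; omega) (by simp [mem_Icc]; omega) (by omega)
  have e1 := T.orderEmbOfFin_unique hcard hFmem hFmono
  have e2 := T.orderEmbOfFin_unique hcard hGmem hGmono
  have : (fun x : Fin (d + 1) => f (a + (x : ℕ))) ⟨k, by omega⟩ =
      (fun x : Fin (d + 1) => g (c + (x : ℕ))) ⟨k, by omega⟩ := by rw [e1, e2]
  simpa using this

/-- A "good description": the sorted enumeration of an m-left-biased set. -/
def Good (n m t : ℕ) (f : ℕ → ℕ) : Prop :=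
  StrictMonoOn f (Finset.Icc 1 t) ∧ (∀ v, 1 ≤ v → v ≤ t → 1 ≤ f v ∧ f v ≤ n) ∧
  m ≤ t ∧ f m ≤ n / 2 ∧ f m + f t ≤ n

lemma Good.mono {n m t f} (h : Good n m t f) : StrictMonoOn f (Finset.Icc 1 t) := h.1
lemma Good.le_of_le {n m t f} (h : Good n m t f) {a b : ℕ} (ha : 1 ≤ a) (hb : b ≤ t)
    (hab : a ≤ b) : f a ≤ f b := by
  have := gap_lemma' h.1 ha hb hab; omega
lemma Good.gap {n m t f} (h : Good n m t f) {a b : ℕ} (ha : 1 ≤ a) (hb : b ≤ t)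
    (hab : a ≤ b) : f a + (b - a) ≤ f b := gap_lemma' h.1 ha hb hab

lemma coreLL {n m r β : ℕ} {f f' : ℕ → ℕ} (hm : 1 ≤ m)
    (hg : Good n m r f) (hg' : Good n m r f')
    {i i' : ℕ} (hi : 1 ≤ i) (hii' : i ≤ i') (hi' : i' ≤ m)
    (E : ∀ k, k ≤ r - 1 →
      vmap r (n - f m + β) f (i + k) = vmap r (n - f' m + β) f' (i' + k)) :
    i = i' ∧ ∀ v, 1 ≤ v → v ≤ r → f v = f' v := by
  obtain ⟨mono, bnd, hmr, half, hsum⟩ := hg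
  obtain ⟨mono', bnd', hmr', half', hsum'⟩ := hg'
  have hfm := bnd m hm hmr
  have hfm' := bnd' m hm hmr'
  by_cases hii : i = i'
  · subst hii
    refine ⟨rfl, ?_⟩
    intro v hv1 hvr
    by_cases hvi : i ≤ v
    · have e := E (v - i) (by omega)
      rw [show i + (v - i) = v by omega, vmap_low f hvr, vmap_low f' hvr] at e
      exact e
    · have hp : f m = f' m := by
        have e := E (m - i) (by omega)
        rwa [show i + (m - i) = m by omega, vmap_low f hmr, vmap_low f' hmr'] at e
      have e := E (r - i + v) (by omega)
      rw [show i + (r - i + v) = r + v by omega, vmap_high f (by omega),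
        vmap_high f' (by omega), show r + v - r = v by omega] at e
      omega
  · exfalso
    have hlt : i < i' := by omega
    have e1 := E (r - i) (by omega)
    rw [show i + (r - i) = r by omega, vmap_low f (le_refl r),
      vmap_high f' (by omega), show i' + (r - i) - r = i' - i by omega] at e1
    have hb1 := bnd' (i' - i) (by omega) (by omega)
    have e2 := E (m - i) (by omega)
    rw [show i + (m - i) = m by omega, vmap_low f hmr] at e2
    by_cases hc : i' + (m - i) ≤ r
    · rw [vmap_low f' hc] at e2
      have hgap := gap_lemma' mono' (a := m) (b := i' + (m - i)) hm hc (by omega)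
      omega
    · rw [vmap_high f' (by omega)] at e2
      have hgapb := gap_lemma' mono' (a := 1) (b := i' + (m - i) - r)
        (le_refl 1) (by omega) (by omega)
      have hb2 := bnd' 1 (le_refl 1) (by omega)
      omega

lemma coreMM {n m r : ℕ} {f f' : ℕ → ℕ} (hm : 1 ≤ m) (hr : 2 ≤ r)
    (hg : Good n m (r - 1) f) (hg' : Good n m (r - 1) f')
    {i i' : ℕ} (hi : 1 ≤ i) (hii' : i ≤ i') (hi' : i' ≤ m)
    (E : ∀ k, k ≤ r - 1 →
      vmap (r - 1) (n + 1 - f m - f 1) f (i + k) =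
      vmap (r - 1) (n + 1 - f' m - f' 1) f' (i' + k)) :
    i = i' ∧ ∀ v, 1 ≤ v → v ≤ r - 1 → f v = f' v := by
  obtain ⟨mono, bnd, hmr, half, hsum⟩ := hg
  obtain ⟨mono', bnd', hmr', half', hsum'⟩ := hg'
  have hfm := bnd m hm hmr
  have hfm' := bnd' m hm hmr'
  have hf1 := bnd 1 (le_refl 1) (by omega)
  have hf1' := bnd' 1 (le_refl 1) (by omega)
  have hf1m : f 1 + (m - 1) ≤ f m := gap_lemma' mono (le_refl 1) hmr hm
  have hf1m' : f' 1 + (m - 1) ≤ f' m := gap_lemma' mono' (le_refl 1) hmr' hm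
  by_cases hii : i = i'
  · subst hii
    refine ⟨rfl, ?_⟩
    have hp : f m = f' m := by
      have e := E (m - i) (by omega)
      rwa [show i + (m - i) = m by omega, vmap_low f hmr, vmap_low f' hmr'] at e
    have hD : f 1 = f' 1 := by
      have efi : f i = f' i := by
        have e := E 0 (by omega)
        rwa [Nat.add_zero, vmap_low f (by omega), vmap_low f' (by omega)] at e
      have e := E (r - 1) (by omega)
      rw [show i + (r - 1) = (r - 1) + i by omega, vmap_high f (by omega),
        vmap_high f' (by omega), show r - 1 + i - (r - 1) = i by omega] at e
      omega
    intro v hv1 hv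
    by_cases hvi : i ≤ v
    · have e := E (v - i) (by omega)
      rw [show i + (v - i) = v by omega, vmap_low f hv, vmap_low f' hv] at e
      exact e
    · have e := E (r - 1 - i + v) (by omega)
      rw [show i + (r - 1 - i + v) = (r - 1) + v by omega, vmap_high f (by omega),
        vmap_high f' (by omega), show r - 1 + v - (r - 1) = v by omega] at e
      omega
  · exfalso
    have hlt : i < i' := by omega
    have e1 := E (r - 1 - i) (by omega)
    rw [show i + (r - 1 - i) = r - 1 by omega, vmap_low f (le_refl _),
      vmap_high f' (by omega), show i' + (r - 1 - i) - (r - 1) = i' - i by omega] at e1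
    have hgap1 := gap_lemma' mono' (a := 1) (b := i' - i) (le_refl 1) (by omega) (by omega)
    have e2 := E (m - i) (by omega)
    rw [show i + (m - i) = m by omega, vmap_low f hmr] at e2
    by_cases hc : i' + (m - i) ≤ r - 1
    · rw [vmap_low f' hc] at e2
      have hgap := gap_lemma' mono' (a := m) (b := i' + (m - i)) hm hc (by omega)
      omega
    · rw [vmap_high f' (by omega)] at e2
      have hgapb := gap_lemma' mono' (a := 1) (b := i' + (m - i) - (r - 1))
        (le_refl 1) (by omega) (by omega)
      omega

lemma coreLM {n m r : ℕ} {f f' : ℕ → ℕ} (hm : 1 ≤ m) (hr : 2 ≤ r)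
    (hg : Good n m r f) (hg' : Good n m (r - 1) f')
    {i i' : ℕ} (hi : 1 ≤ i) (him : i ≤ m) (hi' : 1 ≤ i') (hi'm : i' ≤ m)
    (E : ∀ k, k ≤ r - 1 →
      vmap r (n - f m) f (i + k) =
      vmap (r - 1) (n + 1 - f' m - f' 1) f' (i' + k)) : False := by
  obtain ⟨mono, bnd, hmr, half, hsum⟩ := hg
  obtain ⟨mono', bnd', hmr', half', hsum'⟩ := hg'
  have hfm := bnd m hm hmr
  have hfm' := bnd' m hm hmr'
  have hf1 := bnd 1 (le_refl 1) (by omega)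
  have hf1' := bnd' 1 (le_refl 1) (by omega)
  have hf1m : f 1 + (m - 1) ≤ f m := gap_lemma' mono (le_refl 1) (by omega) hm
  have hf1m' : f' 1 + (m - 1) ≤ f' m := gap_lemma' mono' (le_refl 1) hmr' hm
  rcases lt_trichotomy i' (i - 1) with hc | hc | hc
  · -- i' ≤ i - 2
    have e1 := E (r - i' - 1) (by omega)
    rw [show i + (r - i' - 1) = r + (i - i' - 1) by omega, vmap_high f (by omega),
      show r + (i - i' - 1) - r = i - i' - 1 by omega,
      show i' + (r - i' - 1) = r - 1 by omega, vmap_low f' (le_refl _)] at e1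
    have hb1 := gap_lemma' mono (a := 1) (b := i - i' - 1) (le_refl 1) (by omega) (by omega)
    have e2 := E (m - i') (by omega)
    rw [show i' + (m - i') = m by omega, vmap_low f' hmr'] at e2
    by_cases hc2 : i + (m - i') ≤ r
    · rw [vmap_low f hc2] at e2
      have hgap := gap_lemma' mono (a := m) (b := i + (m - i')) hm hc2 (by omega)
      omega
    · rw [vmap_high f (by omega)] at e2
      have hgapb := gap_lemma' mono (a := 1) (b := i + (m - i') - r)
        (le_refl 1) (by omega) (by omega)
      omega
  · -- i' = i - 1, so i ≥ 2
    have hi2 : 2 ≤ i := by omega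
    have e1 := E (r - i + 1) (by omega)
    rw [show i + (r - i + 1) = r + 1 by omega, vmap_high f (by omega),
      show r + 1 - r = 1 by omega,
      show i' + (r - i + 1) = r - 1 + 1 by omega, vmap_high f' (by omega),
      show r - 1 + 1 - (r - 1) = 1 by omega] at e1
    have e2 := E (m - i) (by omega)
    rw [show i + (m - i) = m by omega, vmap_low f hmr,
      show i' + (m - i) = m - 1 by omega, vmap_low f' (by omega)] at e2
    have hgap : f' (m - 1) + 1 ≤ f' m := by
      have := mono' (a := m - 1) (b := m) (by simp [mem_Icc]; omega)
        (by simp [mem_Icc]; omega) (by omega)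
      omega
    omega
  · -- i' ≥ i
    have e1 := E (r - i') (by omega)
    rw [show i + (r - i') = r - (i' - i) by omega, vmap_low f (by omega),
      show i' + (r - i') = r - 1 + 1 by omega, vmap_high f' (by omega),
      show r - 1 + 1 - (r - 1) = 1 by omega] at e1
    have hb1 : f (r - (i' - i)) ≤ f r := Good.le_of_le ⟨mono, bnd, hmr, half, hsum⟩
      (by omega) (le_refl r) (by omega)
    have e2 := E (m - i') (by omega)
    rw [show i + (m - i') = m - (i' - i) by omega, vmap_low f (by omega),
      show i' + (m - i') = m by omega, vmap_low f' hmr'] at e2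
    have hb2 : f (m - (i' - i)) ≤ f m := Good.le_of_le ⟨mono, bnd, hmr, half, hsum⟩
      (by omega) hmr (by omega)
    omega

lemma coreLR {n m r : ℕ} {f f' : ℕ → ℕ} (hm : 1 ≤ m) (hr : 2 ≤ r)
    (hg : Good n m r f) (hg' : Good n m r f')
    {i i' : ℕ} (hi : 1 ≤ i) (him : i ≤ m) (hi' : 1 ≤ i') (hi'm : i' ≤ m)
    (E : ∀ k, k ≤ r - 1 →
      vmap r (n - f m) f (i + k) + vmap r (n - f' m + 1) f' (r + m - i' - k) = n + 1) :
    False := by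
  obtain ⟨mono, bnd, hmr, half, hsum⟩ := hg
  obtain ⟨mono', bnd', hmr', half', hsum'⟩ := hg'
  have hfm := bnd m hm hmr
  have hfm' := bnd' m hm hmr'
  have hfr := bnd r (by omega) (le_refl r)
  have hfr' := bnd' r (by omega) (le_refl r)
  have ea := E (m - i) (by omega)
  rw [show i + (m - i) = m by omega, vmap_low f hmr,
    show r + m - i' - (m - i) = r + i - i' by omega] at ea
  have eb := E (r - i') (by omega)
  rw [show i + (r - i') = r + i - i' by omega,
    show r + m - i' - (r - i') = m by omega, vmap_low f' hmr'] at eb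
  by_cases hc : i ≤ i'
  · rw [vmap_low f' (by omega)] at ea
    rw [vmap_low f (by omega)] at eb
    have h1 : f' (r + i - i') ≤ f' r := Good.le_of_le ⟨mono', bnd', hmr', half', hsum'⟩
      (by omega) (le_refl r) (by omega)
    have h2 : f (r + i - i') ≤ f r := Good.le_of_le ⟨mono, bnd, hmr, half, hsum⟩
      (by omega) (le_refl r) (by omega)
    omega
  · rw [vmap_high f' (by omega), show r + i - i' - r = i - i' by omega] at ea
    rw [vmap_high f (by omega), show r + i - i' - r = i - i' by omega] at eb
    have h1 := bnd' (i - i') (by omega) (by omega)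
    have h2 := bnd (i - i') (by omega) (by omega)
    omega

lemma coreMR {n m r : ℕ} {f f' : ℕ → ℕ} (hm : 1 ≤ m) (hr : 2 ≤ r)
    (hg : Good n m (r - 1) f) (hg' : Good n m r f')
    {i i' : ℕ} (hi : 1 ≤ i) (him : i ≤ m) (hi' : 1 ≤ i') (hi'm : i' ≤ m)
    (E : ∀ k, k ≤ r - 1 →
      vmap (r - 1) (n + 1 - f m - f 1) f (i + k) +
        vmap r (n - f' m + 1) f' (r + m - i' - k) = n + 1) :
    False := by
  obtain ⟨mono, bnd, hmr, half, hsum⟩ := hg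
  obtain ⟨mono', bnd', hmr', half', hsum'⟩ := hg'
  have hfm := bnd m hm hmr
  have hfm' := bnd' m hm hmr'
  have hf1 := bnd 1 (le_refl 1) (by omega)
  have hfr' := bnd' r (by omega) (le_refl r)
  have hf1m : f 1 + (m - 1) ≤ f m := gap_lemma' mono (le_refl 1) hmr hm
  have ea := E (m - i) (by omega)
  rw [show i + (m - i) = m by omega, vmap_low f hmr,
    show r + m - i' - (m - i) = r + i - i' by omega] at ea
  have eb := E (r - i') (by omega)
  rw [show r + m - i' - (r - i') = m by omega, vmap_low f' hmr'] at eb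
  rcases lt_trichotomy i i' with hc | hc | hc
  · rw [vmap_low f' (by omega)] at ea
    rw [show i + (r - i') = r + i - i' by omega, vmap_low f (by omega)] at eb
    have h1 : f' (r + i - i') ≤ f' r := Good.le_of_le ⟨mono', bnd', hmr', half', hsum'⟩
      (by omega) (le_refl r) (by omega)
    have h2 : f (r + i - i') ≤ f (r - 1) := Good.le_of_le ⟨mono, bnd, hmr, half, hsum⟩
      (by omega) (le_refl _) (by omega)
    omega
  · subst hc
    rw [show r + i - i = r by omega, vmap_low f' (le_refl r)] at ea
    rw [show i + (r - i) = r - 1 + 1 by omega, vmap_high f (by omega),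
      show r - 1 + 1 - (r - 1) = 1 by omega] at eb
    omega
  · rw [vmap_high f' (by omega), show r + i - i' - r = i - i' by omega] at ea
    rw [show i + (r - i') = r - 1 + (i - i' + 1) by omega, vmap_high f (by omega),
      show r - 1 + (i - i' + 1) - (r - 1) = i - i' + 1 by omega] at eb
    have h1 := bnd' (i - i') (by omega) (by omega)
    have h2 : f 1 + 1 ≤ f (i - i' + 1) := by
      have := gap_lemma' mono (a := 1) (b := i - i' + 1) (le_refl 1) (by omega) (by omega)
      omega
    omega

/-- Generic monotonicity/bounds for the piecewise vertex maps. -/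
lemma vmap_good {n m t s' D : ℕ} {f : ℕ → ℕ} (hm : 1 ≤ m) (hg : Good n m t f)
    (hts : t ≤ s') (hst : s' - t ≤ t)
    (hsep : f t < f 1 + D) (hDb : ∀ j, 1 ≤ j → j ≤ s' - t → f j + D ≤ n) :
    StrictMonoOn (vmap t D f) (Finset.Icc 1 s') ∧
    ∀ v, 1 ≤ v → v ≤ s' → 1 ≤ vmap t D f v ∧ vmap t D f v ≤ n := by
  obtain ⟨mono, bnd, hmt, half, hsum⟩ := hg
  have ht1 : 1 ≤ t := le_trans hm hmt
  constructor
  · intro a ha b hb hab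
    simp only [coe_Icc, Set.mem_Icc] at ha hb
    by_cases hat : a ≤ t
    · by_cases hbt : b ≤ t
      · rw [vmap_low f hat, vmap_low f hbt]
        exact mono (by simp [mem_Icc]; omega) (by simp [mem_Icc]; omega) hab
      · rw [vmap_low f hat, vmap_high f (by omega)]
        have h1 : f a ≤ f t := Good.le_of_le ⟨mono, bnd, hmt, half, hsum⟩ (by omega)
          (le_refl t) hat
        have h2 : f 1 ≤ f (b - t) := Good.le_of_le ⟨mono, bnd, hmt, half, hsum⟩
          (le_refl 1) (by omega) (by omega)
        omega
    · rw [vmap_high f (by omega), vmap_high f (by omega)]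
      have : f (a - t) < f (b - t) := mono (by simp [mem_Icc]; omega)
        (by simp [mem_Icc]; omega) (by omega)
      omega
  · intro v hv1 hvs
    by_cases hvt : v ≤ t
    · rw [vmap_low f hvt]; exact bnd v hv1 hvt
    · rw [vmap_high f (by omega)]
      have h1 := bnd (v - t) (by omega) (by omega)
      have h2 := hDb (v - t) (by omega) (by omega)
      omega

section Construction

variable {n r s m : ℕ}

/-- The three vertex maps -/
noncomputable def fL (n r m : ℕ) (S : Finset ℕ) : ℕ → ℕ :=
  vmap r (n - sig S m) (sig S)
noncomputable def gR (n r m : ℕ) (S : Finset ℕ) : ℕ → ℕ :=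
  vmap r (n - sig S m + 1) (sig S)
noncomputable def fR (n r s m : ℕ) (S : Finset ℕ) : ℕ → ℕ :=
  fun v => n + 1 - gR n r m S (s + 1 - v)
noncomputable def fM (n r m : ℕ) (S : Finset ℕ) : ℕ → ℕ :=
  vmap (r - 1) (n + 1 - sig S m - sig S 1) (sig S)

noncomputable def CL (n r s m : ℕ) (S : Finset ℕ) : Finset (Finset ℕ) :=
  (pathEdges r s).image (fun e => e.image (fL n r m S))
noncomputable def CR (n r s m : ℕ) (S : Finset ℕ) : Finset (Finset ℕ) :=
  (pathEdges r s).image (fun e => e.image (fR n r s m S))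
noncomputable def CM (n r s m : ℕ) (S : Finset ℕ) : Finset (Finset ℕ) :=
  (pathEdges r s).image (fun e => e.image (fM n r m S))

/-- goodness of sig for a biased set -/
lemma good_of_mem {n m t : ℕ} (hm : 1 ≤ m) {S : Finset ℕ}
    (hS : S ∈ ((Finset.Icc 1 n).powersetCard t).filter (LeftBiased n m)) :
    Good n m t (sig S) := by
  rw [Finset.mem_filter, Finset.mem_powersetCard] at hS
  obtain ⟨⟨hsub, hcard⟩, hb⟩ := hS
  obtain ⟨hmt, hhalf, hsum⟩ := biased_facts hm hsub hcard hb
  exact ⟨sig_strictMonoOn S hcard,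
    fun v h1 h2 => sig_bounds hsub hcard (by simp [mem_Icc]; omega), hmt, hhalf, hsum⟩

lemma image_of_mem {n m t : ℕ} {S : Finset ℕ}
    (hS : S ∈ ((Finset.Icc 1 n).powersetCard t).filter (LeftBiased n m)) :
    (Finset.Icc 1 t).image (sig S) = S := by
  rw [Finset.mem_filter, Finset.mem_powersetCard] at hS
  exact sig_image S hS.1.2

/-- Properties of fL / gR (β = 0 or 1). -/
lemma fLgR_good {β : ℕ} (hβ : β ≤ 1) (hm : 1 ≤ m) (hmr : m ≤ r) {f : ℕ → ℕ}
    (hg : Good n m r f) :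
    StrictMonoOn (vmap r (n - f m + β) f) (Finset.Icc 1 (r + m - 1)) ∧
    ∀ v, 1 ≤ v → v ≤ r + m - 1 →
      1 ≤ vmap r (n - f m + β) f v ∧ vmap r (n - f m + β) f v ≤ n := by
  have hr1 : 1 ≤ r := le_trans hm hmr
  obtain ⟨mono, bnd, hmt, half, hsum⟩ := hg
  apply vmap_good hm ⟨mono, bnd, hmt, half, hsum⟩ (by omega) (by omega)
  · have h1 := bnd 1 (le_refl 1) (by omega)
    have hfr := bnd r (by omega) (le_refl r)
    omega
  · intro j hj1 hj2
    have hgap := gap_lemma' mono (a := j) (b := m) hj1 hmt (by omega)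
    have := bnd m hm hmt
    omega

lemma fM_good (hm : 1 ≤ m) (hr : 2 ≤ r) {f : ℕ → ℕ} (hg : Good n m (r - 1) f) :
    StrictMonoOn (vmap (r - 1) (n + 1 - f m - f 1) f) (Finset.Icc 1 (r + m - 1)) ∧
    ∀ v, 1 ≤ v → v ≤ r + m - 1 →
      1 ≤ vmap (r - 1) (n + 1 - f m - f 1) f v ∧
        vmap (r - 1) (n + 1 - f m - f 1) f v ≤ n := by
  obtain ⟨mono, bnd, hmt, half, hsum⟩ := hg
  have hf1 := bnd 1 (le_refl 1) (by omega)
  have hfm := bnd m hm hmt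
  have hf1m : f 1 + (m - 1) ≤ f m := gap_lemma' mono (le_refl 1) hmt hm
  have hfr1 := bnd (r - 1) (by omega) (le_refl _)
  apply vmap_good hm ⟨mono, bnd, hmt, half, hsum⟩ (by omega) (by omega)
  · omega
  · intro j hj1 hj2
    have hgap := gap_lemma' mono (a := j) (b := m) hj1 hmt (by omega)
    omega

end Construction

section Assembly

variable {n r s m : ℕ}

lemma fR_good (hm : 1 ≤ m) (hmr : m ≤ r) (hs : s = r + m - 1) {f : ℕ → ℕ}
    (hg : Good n m r f) :
    StrictMonoOn (fun v => n + 1 - vmap r (n - f m + 1) f (s + 1 - v)) (Finset.Icc 1 s) ∧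
    ∀ v, 1 ≤ v → v ≤ s →
      1 ≤ n + 1 - vmap r (n - f m + 1) f (s + 1 - v) ∧
      n + 1 - vmap r (n - f m + 1) f (s + 1 - v) ≤ n := by
  have hr1 : 1 ≤ r := le_trans hm hmr
  obtain ⟨hmono, hbnd⟩ := fLgR_good (β := 1) (le_refl 1) hm hmr hg
  constructor
  · intro a ha b hb hab
    simp only [coe_Icc, Set.mem_Icc] at ha hb
    have h1 : vmap r (n - f m + 1) f (s + 1 - b) < vmap r (n - f m + 1) f (s + 1 - a) :=
      hmono (by simp [mem_Icc]; omega) (by simp [mem_Icc]; omega) (by omega)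
    have h2 := hbnd (s + 1 - a) (by omega) (by omega)
    have h3 := hbnd (s + 1 - b) (by omega) (by omega)
    show n + 1 - vmap r (n - f m + 1) f (s + 1 - a) <
      n + 1 - vmap r (n - f m + 1) f (s + 1 - b)
    omega
  · intro v h1 h2
    have := hbnd (s + 1 - v) (by omega) (by omega)
    omega

lemma mem_copy_iff (hm : 1 ≤ m) (hr : 1 ≤ r) (hs : s = r + m - 1) {F : ℕ → ℕ}
    {x : Finset ℕ} :
    x ∈ (pathEdges r s).image (fun e => e.image F) ↔
      ∃ i, 1 ≤ i ∧ i ≤ m ∧ x = (Finset.Icc i (i + r - 1)).image F := by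
  constructor
  · intro hx
    obtain ⟨e, he, rfl⟩ := Finset.mem_image.mp hx
    obtain ⟨i, hi, rfl⟩ := Finset.mem_image.mp he
    simp only [mem_Icc] at hi
    exact ⟨i, hi.1, by omega, rfl⟩
  · rintro ⟨i, hi1, him, rfl⟩
    apply Finset.mem_image_of_mem
    apply Finset.mem_image_of_mem
    simp only [mem_Icc]; omega

lemma edge_pointwise (hm : 1 ≤ m) (hr : 1 ≤ r) (hs : s = r + m - 1)
    {F1 F2 : ℕ → ℕ} (h1 : StrictMonoOn F1 (Finset.Icc 1 s))
    (h2 : StrictMonoOn F2 (Finset.Icc 1 s)) {i i' : ℕ}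
    (hi : 1 ≤ i) (him : i ≤ m) (hi' : 1 ≤ i') (hi'm : i' ≤ m)
    (hx : (Finset.Icc i (i + r - 1)).image F1 = (Finset.Icc i' (i' + r - 1)).image F2) :
    ∀ k, k ≤ r - 1 → F1 (i + k) = F2 (i' + k) := by
  have hsub1 : StrictMonoOn F1 (Finset.Icc i (i + (r - 1))) := by
    apply h1.mono
    intro z hz
    simp only [coe_Icc, Set.mem_Icc] at hz ⊢
    omega
  have hsub2 : StrictMonoOn F2 (Finset.Icc i' (i' + (r - 1))) := by
    apply h2.mono
    intro z hz
    simp only [coe_Icc, Set.mem_Icc] at hz ⊢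
    omega
  have hx' : (Finset.Icc i (i + (r - 1))).image F1 =
      (Finset.Icc i' (i' + (r - 1))).image F2 := by
    rw [show i + (r - 1) = i + r - 1 by omega, show i' + (r - 1) = i' + r - 1 by omega]
    exact hx
  exact image_Icc_pointwise hsub1 hsub2 hx'

end Assembly

section Disj

variable {n r s m : ℕ}

noncomputable def T1 (n r m : ℕ) : Finset (Finset ℕ) :=
  ((Finset.Icc 1 n).powersetCard r).filter (LeftBiased n m)
noncomputable def T3 (n r m : ℕ) : Finset (Finset ℕ) :=
  ((Finset.Icc 1 n).powersetCard (r - 1)).filter (LeftBiased n m)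

lemma set_eq_of_sig_eq {t : ℕ} {S S' : Finset ℕ}
    (hS : S ∈ ((Finset.Icc 1 n).powersetCard t).filter (LeftBiased n m))
    (hS' : S' ∈ ((Finset.Icc 1 n).powersetCard t).filter (LeftBiased n m))
    (h : ∀ v, 1 ≤ v → v ≤ t → sig S v = sig S' v) : S = S' := by
  rw [← image_of_mem hS, ← image_of_mem hS']
  apply Finset.image_congr
  intro v hv
  simp only [coe_Icc, Set.mem_Icc] at hv
  exact h v hv.1 hv.2

variable (hm : 1 ≤ m) (hmr : m ≤ r) (hr : 2 ≤ r) (hs : s = r + m - 1)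

include hm hmr hr hs

lemma dLL {S S' x} (hS : S ∈ T1 n r m) (hS' : S' ∈ T1 n r m)
    (h1 : x ∈ CL n r s m S) (h2 : x ∈ CL n r s m S') : S = S' := by
  have hg := good_of_mem hm hS
  have hg' := good_of_mem hm hS'
  obtain ⟨i, hi1, him, rfl⟩ := (mem_copy_iff hm (by omega) hs).mp h1
  obtain ⟨i', hi'1, hi'm, hx⟩ := (mem_copy_iff hm (by omega) hs).mp h2
  have m1 := (fLgR_good (β := 0) (by omega) hm hmr hg).1
  have m2 := (fLgR_good (β := 0) (by omega) hm hmr hg').1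
  rw [← hs] at m1 m2
  have E := edge_pointwise hm (by omega) hs m1 m2 hi1 him hi'1 hi'm hx
  rcases le_total i i' with hc | hc
  · have := coreLL (β := 0) hm hg hg' hi1 hc hi'm (by simpa using E)
    exact set_eq_of_sig_eq hS hS' this.2
  · have := coreLL (β := 0) hm hg' hg hi'1 hc him (fun k hk => by simpa using (E k hk).symm)
    exact (set_eq_of_sig_eq hS' hS this.2).symm

lemma dMM {S S' x} (hS : S ∈ T3 n r m) (hS' : S' ∈ T3 n r m)
    (h1 : x ∈ CM n r s m S) (h2 : x ∈ CM n r s m S') : S = S' := by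
  have hg := good_of_mem hm hS
  have hg' := good_of_mem hm hS'
  obtain ⟨i, hi1, him, rfl⟩ := (mem_copy_iff hm (by omega) hs).mp h1
  obtain ⟨i', hi'1, hi'm, hx⟩ := (mem_copy_iff hm (by omega) hs).mp h2
  have m1 := (fM_good hm hr hg).1
  have m2 := (fM_good hm hr hg').1
  rw [← hs] at m1 m2
  have E := edge_pointwise hm (by omega) hs m1 m2 hi1 him hi'1 hi'm hx
  rcases le_total i i' with hc | hc
  · have := coreMM hm hr hg hg' hi1 hc hi'm (by simpa using E)
    exact set_eq_of_sig_eq hS hS' this.2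
  · have := coreMM hm hr hg' hg hi'1 hc him (fun k hk => by simpa using (E k hk).symm)
    exact (set_eq_of_sig_eq hS' hS this.2).symm

lemma dRR {S S' x} (hS : S ∈ T1 n r m) (hS' : S' ∈ T1 n r m)
    (h1 : x ∈ CR n r s m S) (h2 : x ∈ CR n r s m S') : S = S' := by
  have hg := good_of_mem hm hS
  have hg' := good_of_mem hm hS'
  obtain ⟨i, hi1, him, rfl⟩ := (mem_copy_iff hm (by omega) hs).mp h1
  obtain ⟨i', hi'1, hi'm, hx⟩ := (mem_copy_iff hm (by omega) hs).mp h2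
  have gb := (fLgR_good (β := 1) (by omega) hm hmr hg)
  have gb' := (fLgR_good (β := 1) (by omega) hm hmr hg')
  have m1 := (fR_good hm hmr hs hg).1
  have m2 := (fR_good hm hmr hs hg').1
  have E0 := edge_pointwise hm (by omega) hs m1 m2 hi1 him hi'1 hi'm hx
  have E : ∀ k, k ≤ r - 1 →
      vmap r (n - sig S m + 1) (sig S) (m + 1 - i + k) =
      vmap r (n - sig S' m + 1) (sig S') (m + 1 - i' + k) := by
    intro k hk
    have h := E0 (r - 1 - k) (by omega)
    rw [show s + 1 - (i + (r - 1 - k)) = m + 1 - i + k by omega,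
      show s + 1 - (i' + (r - 1 - k)) = m + 1 - i' + k by omega] at h
    have b1 := gb.2 (m + 1 - i + k) (by omega) (by omega)
    have b2 := gb'.2 (m + 1 - i' + k) (by omega) (by omega)
    omega
  rcases le_total i i' with hc | hc
  · have := coreLL (β := 1) hm hg' hg (by omega) (by omega : m + 1 - i' ≤ m + 1 - i)
      (by omega) (fun k hk => (E k hk).symm)
    exact (set_eq_of_sig_eq hS' hS this.2).symm
  · have := coreLL (β := 1) hm hg hg' (by omega) (by omega : m + 1 - i ≤ m + 1 - i')
      (by omega) E
    exact set_eq_of_sig_eq hS hS' this.2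

lemma dLM {S S' x} (hS : S ∈ T1 n r m) (hS' : S' ∈ T3 n r m)
    (h1 : x ∈ CL n r s m S) (h2 : x ∈ CM n r s m S') : False := by
  have hg := good_of_mem hm hS
  have hg' := good_of_mem hm hS'
  obtain ⟨i, hi1, him, rfl⟩ := (mem_copy_iff hm (by omega) hs).mp h1
  obtain ⟨i', hi'1, hi'm, hx⟩ := (mem_copy_iff hm (by omega) hs).mp h2
  have m1 := (fLgR_good (β := 0) (by omega) hm hmr hg).1
  have m2 := (fM_good hm hr hg').1
  rw [← hs] at m1 m2
  have E := edge_pointwise hm (by omega) hs m1 m2 hi1 him hi'1 hi'm hx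
  exact coreLM hm hr hg hg' hi1 him hi'1 hi'm (by simpa using E)

lemma dLR {S S' x} (hS : S ∈ T1 n r m) (hS' : S' ∈ T1 n r m)
    (h1 : x ∈ CL n r s m S) (h2 : x ∈ CR n r s m S') : False := by
  have hg := good_of_mem hm hS
  have hg' := good_of_mem hm hS'
  obtain ⟨i, hi1, him, rfl⟩ := (mem_copy_iff hm (by omega) hs).mp h1
  obtain ⟨i', hi'1, hi'm, hx⟩ := (mem_copy_iff hm (by omega) hs).mp h2
  have m1 := (fLgR_good (β := 0) (by omega) hm hmr hg).1
  rw [← hs] at m1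
  have gb' := (fLgR_good (β := 1) (by omega) hm hmr hg')
  have m2 := (fR_good hm hmr hs hg').1
  have E0 := edge_pointwise hm (by omega) hs m1 m2 hi1 him hi'1 hi'm hx
  apply coreLR hm hr hg hg' hi1 him hi'1 hi'm
  intro k hk
  have h := E0 k (by omega)
  simp only [fL, fR, gR, Nat.add_zero] at h ⊢
  rw [show s + 1 - (i' + k) = r + m - i' - k by omega] at h
  have b2 := gb'.2 (r + m - i' - k) (by omega) (by omega)
  omega

lemma dMR {S S' x} (hS : S ∈ T3 n r m) (hS' : S' ∈ T1 n r m)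
    (h1 : x ∈ CM n r s m S) (h2 : x ∈ CR n r s m S') : False := by
  have hg := good_of_mem hm hS
  have hg' := good_of_mem hm hS'
  obtain ⟨i, hi1, him, rfl⟩ := (mem_copy_iff hm (by omega) hs).mp h1
  obtain ⟨i', hi'1, hi'm, hx⟩ := (mem_copy_iff hm (by omega) hs).mp h2
  have m1 := (fM_good hm hr hg).1
  rw [← hs] at m1
  have gb' := (fLgR_good (β := 1) (by omega) hm hmr hg')
  have m2 := (fR_good hm hmr hs hg').1
  have E0 := edge_pointwise hm (by omega) hs m1 m2 hi1 him hi'1 hi'm hx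
  apply coreMR hm hr hg hg' hi1 him hi'1 hi'm
  intro k hk
  have h := E0 k (by omega)
  rw [show s + 1 - (i' + k) = r + m - i' - k by omega] at h
  have b2 := gb'.2 (r + m - i' - k) (by omega) (by omega)
  omega

end Disj

section Final

variable {n r s m : ℕ}

lemma isCopy_CL (hm : 1 ≤ m) (hmr : m ≤ r) (hs : s = r + m - 1) {S : Finset ℕ}
    (hS : S ∈ T1 n r m) : IsCopy n s (pathEdges r s) (CL n r s m S) := by
  have hg := good_of_mem hm hS
  obtain ⟨hmono, hb⟩ := fLgR_good (β := 0) (by omega) hm hmr hg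
  refine ⟨fL n r m S, ?_, ?_, rfl⟩
  · rw [hs]; simpa [fL] using hmono
  · intro v hv; simp only [mem_Icc] at hv ⊢
    have := hb v hv.1 (by omega)
    simpa [fL] using this

lemma isCopy_CR (hm : 1 ≤ m) (hmr : m ≤ r) (hs : s = r + m - 1) {S : Finset ℕ}
    (hS : S ∈ T1 n r m) : IsCopy n s (pathEdges r s) (CR n r s m S) := by
  have hg := good_of_mem hm hS
  obtain ⟨hmono, hb⟩ := fR_good hm hmr hs hg
  refine ⟨fR n r s m S, by unfold fR gR; exact hmono, ?_, rfl⟩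
  · intro v hv; simp only [mem_Icc] at hv ⊢
    have := hb v hv.1 hv.2
    simpa [fR, gR] using this

lemma isCopy_CM (hm : 1 ≤ m) (hmr : m ≤ r) (hr : 2 ≤ r) (hs : s = r + m - 1) {S : Finset ℕ}
    (hS : S ∈ T3 n r m) : IsCopy n s (pathEdges r s) (CM n r s m S) := by
  have hg := good_of_mem hm hS
  obtain ⟨hmono, hb⟩ := fM_good hm hr hg
  refine ⟨fM n r m S, ?_, ?_, rfl⟩
  · rw [hs]; simpa [fM] using hmono
  · intro v hv; simp only [mem_Icc] at hv ⊢
    have := hb v hv.1 (by omega)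
    simpa [fM] using this

lemma CL_nonempty (hm : 1 ≤ m) : ((Finset.Icc 1 (1 + r - 1)).image (fL n r m S) ∈
    CL n r s m S) ∨ True := Or.inr trivial

lemma copy_nonempty (hm : 1 ≤ m) (hr : 1 ≤ r) (hs : s = r + m - 1) (F : ℕ → ℕ) :
    (Finset.Icc 1 (1 + r - 1)).image F ∈ (pathEdges r s).image (fun e => e.image F) :=
  (mem_copy_iff hm hr hs).mpr ⟨1, le_refl 1, hm, rfl⟩

lemma packing_card_le (hr : 1 ≤ r) (hrs : r ≤ s) {P : Finset (Finset (Finset ℕ))}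
    (hP : IsPacking n s (pathEdges r s) P) :
    P.card ≤ (((Finset.Icc 1 n).powersetCard r).powerset).card := by
  apply Finset.card_le_card
  intro C hC
  rw [Finset.mem_powerset]
  obtain ⟨f, hmono, hbnd, rfl⟩ := hP.1 C hC
  intro x hx
  obtain ⟨e, he, rfl⟩ := Finset.mem_image.mp hx
  rw [pathEdges] at he
  obtain ⟨i, hi, rfl⟩ := Finset.mem_image.mp he
  simp only [mem_Icc] at hi
  rw [Finset.mem_powersetCard]
  constructor
  · intro y hy
    obtain ⟨v, hv, rfl⟩ := Finset.mem_image.mp hy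
    simp only [mem_Icc] at hv
    exact hbnd v (by simp [mem_Icc]; omega)
  · rw [Finset.card_image_of_injOn, Nat.card_Icc]
    · omega
    · apply Set.InjOn.mono _ hmono.injOn
      intro z hz
      simp only [coe_Icc, Set.mem_Icc] at hz ⊢
      omega

theorem stmt1' (n r s m : ℕ) (hn : 0 < n) (hev : Even n)
    (hr : 2 ≤ r) (hrs : r ≤ s) (hs : s ≤ 2 * r - 1) (hm : m = s - r + 1) :
    2 * hcount n r m + hcount n (r - 1) m ≤ nu n s (pathEdges r s) := by
  have hm1 : 1 ≤ m := by omega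
  have hmr : m ≤ r := by omega
  have hs' : s = r + m - 1 := by omega
  classical
  set PL := (T1 n r m).image (CL n r s m) with hPL
  set PR := (T1 n r m).image (CR n r s m) with hPR
  set PM := (T3 n r m).image (CM n r s m) with hPM
  set P := PL ∪ PR ∪ PM with hP
  have memPL : ∀ C ∈ PL, ∃ S ∈ T1 n r m, C = CL n r s m S := by
    intro C hC; obtain ⟨S, hS, rfl⟩ := Finset.mem_image.mp hC; exact ⟨S, hS, rfl⟩
  have memPR : ∀ C ∈ PR, ∃ S ∈ T1 n r m, C = CR n r s m S := by
    intro C hC; obtain ⟨S, hS, rfl⟩ := Finset.mem_image.mp hC; exact ⟨S, hS, rfl⟩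
  have memPM : ∀ C ∈ PM, ∃ S ∈ T3 n r m, C = CM n r s m S := by
    intro C hC; obtain ⟨S, hS, rfl⟩ := Finset.mem_image.mp hC; exact ⟨S, hS, rfl⟩
  -- key: copies sharing an edge are equal
  have key : ∀ C ∈ P, ∀ C' ∈ P, (∃ x, x ∈ C ∧ x ∈ C') → C = C' := by
    intro C hC C' hC' hx
    obtain ⟨x, hx1, hx2⟩ := hx
    rcases Finset.mem_union.mp hC with h1 | h1
    · rcases Finset.mem_union.mp h1 with h2 | h2
      · obtain ⟨S, hS, rfl⟩ := memPL C h2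
        rcases Finset.mem_union.mp hC' with h1' | h1'
        · rcases Finset.mem_union.mp h1' with h2' | h2'
          · obtain ⟨S', hS', rfl⟩ := memPL C' h2'
            rw [dLL hm1 hmr hr hs' hS hS' hx1 hx2]
          · obtain ⟨S', hS', rfl⟩ := memPR C' h2'
            exact (dLR hm1 hmr hr hs' hS hS' hx1 hx2).elim
        · obtain ⟨S', hS', rfl⟩ := memPM C' h1'
          exact (dLM hm1 hmr hr hs' hS hS' hx1 hx2).elim
      · obtain ⟨S, hS, rfl⟩ := memPR C h2
        rcases Finset.mem_union.mp hC' with h1' | h1'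
        · rcases Finset.mem_union.mp h1' with h2' | h2'
          · obtain ⟨S', hS', rfl⟩ := memPL C' h2'
            exact (dLR hm1 hmr hr hs' hS' hS hx2 hx1).elim
          · obtain ⟨S', hS', rfl⟩ := memPR C' h2'
            rw [dRR hm1 hmr hr hs' hS hS' hx1 hx2]
        · obtain ⟨S', hS', rfl⟩ := memPM C' h1'
          exact (dMR hm1 hmr hr hs' hS' hS hx2 hx1).elim
    · obtain ⟨S, hS, rfl⟩ := memPM C h1
      rcases Finset.mem_union.mp hC' with h1' | h1'
      · rcases Finset.mem_union.mp h1' with h2' | h2'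
        · obtain ⟨S', hS', rfl⟩ := memPL C' h2'
          exact (dLM hm1 hmr hr hs' hS' hS hx2 hx1).elim
        · obtain ⟨S', hS', rfl⟩ := memPR C' h2'
          exact (dMR hm1 hmr hr hs' hS hS' hx1 hx2).elim
      · obtain ⟨S', hS', rfl⟩ := memPM C' h1'
        rw [dMM hm1 hmr hr hs' hS hS' hx1 hx2]
  have hpack : IsPacking n s (pathEdges r s) P := by
    constructor
    · intro C hC
      rcases Finset.mem_union.mp hC with h1 | h1
      · rcases Finset.mem_union.mp h1 with h2 | h2
        · obtain ⟨S, hS, rfl⟩ := memPL C h2; exact isCopy_CL hm1 hmr hs' hS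
        · obtain ⟨S, hS, rfl⟩ := memPR C h2; exact isCopy_CR hm1 hmr hs' hS
      · obtain ⟨S, hS, rfl⟩ := memPM C h1; exact isCopy_CM hm1 hmr hr hs' hS
    · intro C hC C' hC' hne
      by_contra hnd
      obtain ⟨x, ha, hb⟩ := Finset.not_disjoint_iff.mp hnd
      exact hne (key C hC C' hC' ⟨x, ha, hb⟩)
  -- injectivity and family disjointness
  have injL : Set.InjOn (CL n r s m) ↑(T1 n r m) := by
    intro S hS S' hS' h
    have hx1 := copy_nonempty hm1 (by omega) hs' (fL n r m S)
    have hx2 : (Finset.Icc 1 (1 + r - 1)).image (fL n r m S) ∈ CL n r s m S' := by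
      rw [← h]; exact hx1
    exact dLL hm1 hmr hr hs' hS hS' hx1 hx2
  have injR : Set.InjOn (CR n r s m) ↑(T1 n r m) := by
    intro S hS S' hS' h
    have hx1 := copy_nonempty hm1 (by omega) hs' (fR n r s m S)
    have hx2 : (Finset.Icc 1 (1 + r - 1)).image (fR n r s m S) ∈ CR n r s m S' := by
      rw [← h]; exact hx1
    exact dRR hm1 hmr hr hs' hS hS' hx1 hx2
  have injM : Set.InjOn (CM n r s m) ↑(T3 n r m) := by
    intro S hS S' hS' h
    have hx1 := copy_nonempty hm1 (by omega) hs' (fM n r m S)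
    have hx2 : (Finset.Icc 1 (1 + r - 1)).image (fM n r m S) ∈ CM n r s m S' := by
      rw [← h]; exact hx1
    exact dMM hm1 hmr hr hs' hS hS' hx1 hx2
  have disjLR : Disjoint PL PR := by
    rw [Finset.disjoint_left]
    intro C hCl hCr
    obtain ⟨S, hS, rfl⟩ := memPL C hCl
    obtain ⟨S', hS', hEq⟩ := memPR _ hCr
    have hx1 := copy_nonempty hm1 (by omega) hs' (fL n r m S)
    have hx2 : (Finset.Icc 1 (1 + r - 1)).image (fL n r m S) ∈ CR n r s m S' := by
      rw [← hEq]; exact hx1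
    exact dLR hm1 hmr hr hs' hS hS' hx1 hx2
  have disjLRM : Disjoint (PL ∪ PR) PM := by
    rw [Finset.disjoint_left]
    intro C hCl hCm
    obtain ⟨S', hS', hEq⟩ := memPM _ hCm
    rcases Finset.mem_union.mp hCl with h2 | h2
    · obtain ⟨S, hS, rfl⟩ := memPL C h2
      have hx1 := copy_nonempty hm1 (by omega) hs' (fL n r m S)
      have hx2 : (Finset.Icc 1 (1 + r - 1)).image (fL n r m S) ∈ CM n r s m S' := by
        rw [← hEq]; exact hx1
      exact dLM hm1 hmr hr hs' hS hS' hx1 hx2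
    · obtain ⟨S, hS, rfl⟩ := memPR C h2
      have hx1 := copy_nonempty hm1 (by omega) hs' (fR n r s m S)
      have hx2 : (Finset.Icc 1 (1 + r - 1)).image (fR n r s m S) ∈ CM n r s m S' := by
        rw [← hEq]; exact hx1
      exact dMR hm1 hmr hr hs' hS' hS hx2 hx1
  have cPL : PL.card = hcount n r m := by
    rw [hPL, Finset.card_image_of_injOn injL]; rfl
  have cPR : PR.card = hcount n r m := by
    rw [hPR, Finset.card_image_of_injOn injR]; rfl
  have cPM : PM.card = hcount n (r - 1) m := by
    rw [hPM, Finset.card_image_of_injOn injM]; rfl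
  have cP : P.card = 2 * hcount n r m + hcount n (r - 1) m := by
    rw [hP, Finset.card_union_of_disjoint disjLRM, Finset.card_union_of_disjoint disjLR,
      cPL, cPR, cPM]
    ring
  have hmem : P.card ∈ {k | ∃ Q : Finset (Finset (Finset ℕ)),
      IsPacking n s (pathEdges r s) Q ∧ Q.card = k} := ⟨P, hpack, rfl⟩
  have hbdd : BddAbove {k | ∃ Q : Finset (Finset (Finset ℕ)),
      IsPacking n s (pathEdges r s) Q ∧ Q.card = k} := by
    refine ⟨(((Finset.Icc 1 n).powersetCard r).powerset).card, ?_⟩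
    rintro k ⟨Q, hQ, rfl⟩
    exact packing_card_le (by omega) hrs hQ
  have := le_csSup hbdd hmem
  rw [cP] at this
  exact this

end Final

/-- For even `n > 0`, `2 ≤ r ≤ s ≤ 2r-1` and `m = s-r+1`,
`ν(n, P^{(r)}_s) ≥ 2·h(n,r,m) + h(n,r-1,m)`. -/
theorem stmt1 (n r s m : ℕ) (hn : 0 < n) (hev : Even n)
    (hr : 2 ≤ r) (hrs : r ≤ s) (hs : s ≤ 2 * r - 1) (hm : m = s - r + 1) :
    2 * hcount n r m + hcount n (r - 1) m ≤ nu n s (pathEdges r s) := by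
  exact stmt1' n r s m hn hev hr hrs hs hm
end

section
/- Let n be an even positive integer, let r and s be integers with 2 ≤ r ≤ s ≤ 2r−1, and let m = s−r+1. Then each of the four quantities ν(n, P^{(r)}_s), ν(n, LP^{(r)}_s), τ(n, P^{(r)}_s), and τ(n, LP^{(r)}_s) equals 2·h(n,r,m) + h(n,r−1,m). -/
open Finset
open scoped Classical

/-! ### Auxiliary development -/

section Aux

/-- enumeration of a finset of naturals, 1-indexed -/
noncomputable def enum1 (X : Finset ℕ) (j : ℕ) : ℕ :=
  if h : j - 1 < X.card then X.orderEmbOfFin rfl ⟨j - 1, h⟩ else 0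

lemma enum1_mem (X : Finset ℕ) {j : ℕ} (h1 : 1 ≤ j) (h2 : j ≤ X.card) :
    enum1 X j ∈ X := by
  have h : j - 1 < X.card := by omega
  simp only [enum1, dif_pos h]
  exact X.orderEmbOfFin_mem rfl _

lemma enum1_strictMonoOn (X : Finset ℕ) :
    StrictMonoOn (enum1 X) ↑(Finset.Icc 1 X.card) := by
  intro a ha b hb hab
  simp only [coe_Icc, Set.mem_Icc] at ha hb
  have h1 : a - 1 < X.card := by omega
  have h2 : b - 1 < X.card := by omega
  simp only [enum1, dif_pos h1, dif_pos h2]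
  exact (X.orderEmbOfFin rfl).strictMono (by simp [Fin.lt_def]; omega)

lemma enum1_injOn (X : Finset ℕ) :
    Set.InjOn (enum1 X) ↑(Finset.Icc 1 X.card) :=
  (enum1_strictMonoOn X).injOn

lemma enum1_lt_enum1 (X : Finset ℕ) {a b : ℕ} (ha : a ∈ Finset.Icc 1 X.card)
    (hb : b ∈ Finset.Icc 1 X.card) (h : a < b) : enum1 X a < enum1 X b :=
  enum1_strictMonoOn X (by exact_mod_cast ha) (by exact_mod_cast hb) h

lemma enum1_image (X : Finset ℕ) :
    (Finset.Icc 1 X.card).image (enum1 X) = X := by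
  apply Finset.eq_of_subset_of_card_le
  · intro y hy
    simp only [mem_image, mem_Icc] at hy
    obtain ⟨j, ⟨hj1, hj2⟩, rfl⟩ := hy
    exact enum1_mem X hj1 hj2
  · rw [Finset.card_image_of_injOn (by exact_mod_cast enum1_injOn X)]
    rw [Nat.card_Icc]; omega

/-- characterization of LeftBiased via an in-set witness -/
def mybias (n m : ℕ) (S : Finset ℕ) : Prop :=
  ∃ u ∈ S, (S ∩ Finset.Icc 1 u).card = m ∧ ∀ y ∈ S, u + y ≤ n

lemma leftBiased_iff_mybias {n m : ℕ} (hm : 1 ≤ m) {S : Finset ℕ}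
    (hS : S ⊆ Finset.Icc 1 n) : LeftBiased n m S ↔ mybias n m S := by
  constructor
  · rintro ⟨u, hu, hcard, htop⟩
    have hne : (S ∩ Finset.Icc 1 u).Nonempty := by
      rw [← Finset.card_pos, hcard]; omega
    set u' := (S ∩ Finset.Icc 1 u).max' hne with hu'
    have hu'mem : u' ∈ S ∩ Finset.Icc 1 u := (S ∩ Finset.Icc 1 u).max'_mem hne
    simp only [mem_inter, mem_Icc] at hu'mem
    refine ⟨u', hu'mem.1, ?_, ?_⟩
    · have : S ∩ Finset.Icc 1 u' = S ∩ Finset.Icc 1 u := by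
        apply Finset.Subset.antisymm
        · intro y hy; simp only [mem_inter, mem_Icc] at hy ⊢
          exact ⟨hy.1, hy.2.1, le_trans hy.2.2 hu'mem.2.2⟩
        · intro y hy
          have hy' := Finset.le_max' _ y hy
          simp only [mem_inter, mem_Icc] at hy ⊢
          exact ⟨hy.1, hy.2.1, hy'⟩
      rw [this, hcard]
    · intro y hy
      have hyn : y ≤ n := (Finset.mem_Icc.mp (hS hy)).2
      have : y ∉ Finset.Icc (n + 1 - u) n := by
        intro hc
        have : y ∈ S ∩ Finset.Icc (n + 1 - u) n := Finset.mem_inter.mpr ⟨hy, hc⟩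
        rw [htop] at this; exact absurd this (Finset.notMem_empty y)
      simp only [mem_Icc] at this
      omega
  · rintro ⟨u, huS, hcard, hsum⟩
    have h2u : u + u ≤ n := hsum u huS
    refine ⟨u, by omega, hcard, ?_⟩
    rw [Finset.eq_empty_iff_forall_notMem]
    intro y hy
    simp only [mem_inter, mem_Icc] at hy
    have := hsum y hy.1
    omega

noncomputable def VB (n : ℕ) (B : Finset ℕ) : ℕ :=
  if hB : B.Nonempty then min (B.min' hB - 1) (n - B.max' hB) else 0

noncomputable def DD (n : ℕ) (B : Finset ℕ) : ℕ := n - VB n B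

noncomputable def fcop (n m r : ℕ) (H B : Finset ℕ) : ℕ → ℕ := fun t =>
  if t ≤ m - 1 then enum1 H t
  else if t ≤ r then enum1 B (t - (m - 1))
  else enum1 H (t - r) + DD n B

structure GoodPair (n m r : ℕ) (H B : Finset ℕ) : Prop where
  hm : 1 ≤ m
  hmr : m ≤ r
  cardH : H.card = m - 1
  cardB : B.card = r - m + 1
  subH : H ⊆ Finset.Icc 1 n
  subB : B ⊆ Finset.Icc 1 n
  cross : ∀ x ∈ H, ∀ y ∈ B, x < y ∧ x + y ≤ n

namespace GoodPair

variable {n m r : ℕ} {H B : Finset ℕ}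

lemma Bne (gp : GoodPair n m r H B) : B.Nonempty := by
  rw [← Finset.card_pos, gp.cardB]; have := gp.hmr; omega

lemma VB_eq (gp : GoodPair n m r H B) :
    VB n B = min (B.min' gp.Bne - 1) (n - B.max' gp.Bne) := by
  rw [VB, dif_pos gp.Bne]

lemma headLe (gp : GoodPair n m r H B) : ∀ x ∈ H, x ≤ VB n B := by
  intro x hx
  rw [gp.VB_eq]
  have h1 := (gp.cross x hx _ (B.min'_mem gp.Bne)).1
  have h2 := (gp.cross x hx _ (B.max'_mem gp.Bne)).2
  omega

lemma midZone (gp : GoodPair n m r H B) : ∀ y ∈ B, VB n B < y ∧ y ≤ n - VB n B := by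
  intro y hy
  rw [gp.VB_eq]
  have h1 := B.min'_le y hy
  have h2 := B.le_max' y hy
  have h3 := (Finset.mem_Icc.mp (gp.subB hy)).1
  have h4 := (Finset.mem_Icc.mp (gp.subB (B.max'_mem gp.Bne))).2
  have h5 := (Finset.mem_Icc.mp (gp.subB (B.min'_mem gp.Bne))).1
  omega

lemma twoVB (gp : GoodPair n m r H B) : 2 * VB n B < n := by
  rw [gp.VB_eq]
  have h4 := (Finset.mem_Icc.mp (gp.subB (B.max'_mem gp.Bne))).2
  have h5 := (Finset.mem_Icc.mp (gp.subB (B.min'_mem gp.Bne))).1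
  have h6 := B.min'_le _ (B.max'_mem gp.Bne)
  omega

lemma tailZone (gp : GoodPair n m r H B) :
    ∀ x ∈ H, n - VB n B < x + DD n B ∧ x + DD n B ≤ n := by
  intro x hx
  have h1 := gp.headLe x hx
  have h2 := (Finset.mem_Icc.mp (gp.subH hx)).1
  have h3 := gp.twoVB
  rw [DD]
  omega

lemma fcop_lo (gp : GoodPair n m r H B) {t : ℕ} (ht : t ∈ Finset.Icc 1 (m - 1)) :
    fcop n m r H B t = enum1 H t := by
  rw [fcop, if_pos (Finset.mem_Icc.mp ht).2]

lemma fcop_mid (gp : GoodPair n m r H B) {t : ℕ} (ht : t ∈ Finset.Icc m r) :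
    fcop n m r H B t = enum1 B (t - (m - 1)) := by
  have := gp.hm
  rw [Finset.mem_Icc] at ht
  rw [fcop, if_neg (by omega), if_pos ht.2]

lemma fcop_hi (gp : GoodPair n m r H B) {t : ℕ} (ht : t ∈ Finset.Icc (r + 1) (r + m - 1)) :
    fcop n m r H B t = enum1 H (t - r) + DD n B := by
  have := gp.hm; have := gp.hmr
  rw [Finset.mem_Icc] at ht
  rw [fcop, if_neg (by omega), if_neg (by omega)]

lemma fcop_lo_mem (gp : GoodPair n m r H B) {t : ℕ} (ht : t ∈ Finset.Icc 1 (m - 1)) :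
    fcop n m r H B t ∈ H := by
  rw [gp.fcop_lo ht]
  rw [Finset.mem_Icc] at ht
  have := gp.cardH
  exact enum1_mem H ht.1 (by omega)

lemma fcop_mid_mem (gp : GoodPair n m r H B) {t : ℕ} (ht : t ∈ Finset.Icc m r) :
    fcop n m r H B t ∈ B := by
  rw [gp.fcop_mid ht]
  rw [Finset.mem_Icc] at ht
  have := gp.cardB; have := gp.hm
  exact enum1_mem B (by omega) (by omega)

lemma fcop_hi_mem (gp : GoodPair n m r H B) {t : ℕ} (ht : t ∈ Finset.Icc (r + 1) (r + m - 1)) :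
    ∃ x ∈ H, fcop n m r H B t = x + DD n B := by
  rw [gp.fcop_hi ht]
  rw [Finset.mem_Icc] at ht
  have := gp.cardH; have := gp.hm; have := gp.hmr
  exact ⟨enum1 H (t - r), enum1_mem H (by omega) (by omega), rfl⟩

lemma fcop_strictMono (gp : GoodPair n m r H B) :
    StrictMonoOn (fcop n m r H B) ↑(Finset.Icc 1 (r + m - 1)) := by
  have hm := gp.hm; have hmr := gp.hmr; have hcH := gp.cardH; have hcB := gp.cardB
  intro a ha b hb hab
  simp only [coe_Icc, Set.mem_Icc] at ha hb
  -- zone of a and b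
  rcases le_or_gt a (m-1) with haz | haz
  · have hav : fcop n m r H B a ∈ H := gp.fcop_lo_mem (Finset.mem_Icc.mpr ⟨ha.1, haz⟩)
    rcases le_or_gt b (m-1) with hbz | hbz
    · rw [gp.fcop_lo (Finset.mem_Icc.mpr ⟨ha.1, haz⟩), gp.fcop_lo (Finset.mem_Icc.mpr ⟨hb.1, hbz⟩)]
      exact enum1_lt_enum1 H (by rw [Finset.mem_Icc]; omega) (by rw [Finset.mem_Icc]; omega) hab
    · rcases le_or_gt b r with hbz2 | hbz2
      · have hbv : fcop n m r H B b ∈ B := gp.fcop_mid_mem (Finset.mem_Icc.mpr ⟨by omega, hbz2⟩)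
        have := gp.headLe _ hav
        have := (gp.midZone _ hbv).1
        omega
      · obtain ⟨x, hx, hxe⟩ := gp.fcop_hi_mem (t := b) (Finset.mem_Icc.mpr ⟨by omega, by omega⟩)
        have := gp.headLe _ hav
        have := (gp.tailZone x hx).1
        have := gp.twoVB
        omega
  · rcases le_or_gt a r with haz2 | haz2
    · have hav : fcop n m r H B a ∈ B := gp.fcop_mid_mem (Finset.mem_Icc.mpr ⟨by omega, haz2⟩)
      rcases le_or_gt b r with hbz2 | hbz2
      · rw [gp.fcop_mid (Finset.mem_Icc.mpr (⟨by omega, haz2⟩ : m ≤ a ∧ a ≤ r)),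
           gp.fcop_mid (Finset.mem_Icc.mpr (⟨by omega, hbz2⟩ : m ≤ b ∧ b ≤ r))]
        exact enum1_lt_enum1 B (by rw [Finset.mem_Icc]; omega) (by rw [Finset.mem_Icc]; omega)
          (by omega)
      · obtain ⟨x, hx, hxe⟩ := gp.fcop_hi_mem (t := b) (Finset.mem_Icc.mpr ⟨by omega, by omega⟩)
        have := (gp.midZone _ hav).2
        have := (gp.tailZone x hx).1
        omega
    · obtain ⟨x, hx, hxe⟩ := gp.fcop_hi_mem (t := a) (Finset.mem_Icc.mpr ⟨by omega, by omega⟩)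
      obtain ⟨y, hy, hye⟩ := gp.fcop_hi_mem (t := b) (Finset.mem_Icc.mpr ⟨by omega, by omega⟩)
      rw [gp.fcop_hi (t := a) (Finset.mem_Icc.mpr ⟨by omega, by omega⟩),
         gp.fcop_hi (t := b) (Finset.mem_Icc.mpr ⟨by omega, by omega⟩)]
      have : enum1 H (a - r) < enum1 H (b - r) :=
        enum1_lt_enum1 H (by rw [Finset.mem_Icc]; omega) (by rw [Finset.mem_Icc]; omega) (by omega)
      omega

lemma fcop_maps (gp : GoodPair n m r H B) :
    ∀ t ∈ Finset.Icc 1 (r + m - 1), fcop n m r H B t ∈ Finset.Icc 1 n := by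
  have hm := gp.hm; have hmr := gp.hmr
  intro t ht
  rw [Finset.mem_Icc] at ht
  rcases le_or_gt t (m-1) with hz | hz
  · exact gp.subH (gp.fcop_lo_mem (Finset.mem_Icc.mpr ⟨ht.1, hz⟩))
  · rcases le_or_gt t r with hz2 | hz2
    · exact gp.subB (gp.fcop_mid_mem (Finset.mem_Icc.mpr ⟨by omega, hz2⟩))
    · obtain ⟨x, hx, hxe⟩ := gp.fcop_hi_mem (t := t) (Finset.mem_Icc.mpr ⟨by omega, by omega⟩)
      have := gp.tailZone x hx
      have := gp.twoVB
      rw [Finset.mem_Icc]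
      omega

end GoodPair

noncomputable def Xe (n m r : ℕ) (H B : Finset ℕ) (i : ℕ) : Finset ℕ :=
  (Finset.Icc i (i + r - 1)).image (fcop n m r H B)

noncomputable def loPart (m : ℕ) (H : Finset ℕ) (i : ℕ) : Finset ℕ :=
  (Finset.Icc i (m - 1)).image (enum1 H)

noncomputable def hiPart (n : ℕ) (H B : Finset ℕ) (i : ℕ) : Finset ℕ :=
  (Finset.Icc 1 (i - 1)).image (fun j => enum1 H j + DD n B)

namespace GoodPair
variable {n m r : ℕ} {H B : Finset ℕ}

lemma Xe_eq (gp : GoodPair n m r H B) {i : ℕ} (hi : i ∈ Finset.Icc 1 m) :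
    Xe n m r H B i = loPart m H i ∪ B ∪ hiPart n H B i := by
  have hm := gp.hm; have hmr := gp.hmr; have hcB := gp.cardB
  rw [Finset.mem_Icc] at hi
  ext y
  simp only [Xe, loPart, hiPart, Finset.mem_union, Finset.mem_image, Finset.mem_Icc]
  constructor
  · rintro ⟨t, ⟨ht1, ht2⟩, rfl⟩
    rcases le_or_gt t (m-1) with hz | hz
    · exact Or.inl (Or.inl ⟨t, ⟨ht1, hz⟩, (gp.fcop_lo (Finset.mem_Icc.mpr ⟨by omega, hz⟩)).symm⟩)
    · rcases le_or_gt t r with hz2 | hz2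
      · refine Or.inl (Or.inr ?_)
        rw [gp.fcop_mid (Finset.mem_Icc.mpr ⟨by omega, hz2⟩)]
        exact enum1_mem B (by omega) (by omega)
      · refine Or.inr ⟨t - r, ⟨by omega, by omega⟩, ?_⟩
        rw [gp.fcop_hi (Finset.mem_Icc.mpr ⟨by omega, by omega⟩)]
  · rintro ((⟨t, ⟨ht1, ht2⟩, rfl⟩ | hyB) | ⟨j, ⟨hj1, hj2⟩, rfl⟩)
    · exact ⟨t, ⟨ht1, by omega⟩, gp.fcop_lo (Finset.mem_Icc.mpr ⟨by omega, ht2⟩)⟩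
    · have : y ∈ (Finset.Icc 1 B.card).image (enum1 B) := by rw [enum1_image]; exact hyB
      obtain ⟨j, hj, rfl⟩ := Finset.mem_image.mp this
      rw [Finset.mem_Icc] at hj
      refine ⟨j + (m - 1), ⟨by omega, by omega⟩, ?_⟩
      rw [gp.fcop_mid (Finset.mem_Icc.mpr ⟨by omega, by omega⟩)]
      congr 1
      omega
    · refine ⟨j + r, ⟨by omega, by omega⟩, ?_⟩
      rw [gp.fcop_hi (Finset.mem_Icc.mpr ⟨by omega, by omega⟩)]
      congr 2
      omega

lemma loPart_subset (gp : GoodPair n m r H B) {i : ℕ} (hi1 : 1 ≤ i) : loPart m H i ⊆ H := by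
  intro y hy
  obtain ⟨t, ht, rfl⟩ := Finset.mem_image.mp hy
  rw [Finset.mem_Icc] at ht
  have := gp.cardH
  exact enum1_mem H (by omega) (by omega)

lemma hiPart_mem (gp : GoodPair n m r H B) {i y : ℕ} (hy : y ∈ hiPart n H B i)
    (hi : i ≤ m) : ∃ x ∈ H, y = x + DD n B := by
  obtain ⟨j, hj, rfl⟩ := Finset.mem_image.mp hy
  rw [Finset.mem_Icc] at hj
  have := gp.cardH
  exact ⟨enum1 H j, enum1_mem H (by omega) (by omega), rfl⟩

lemma Xe_inter_lo (gp : GoodPair n m r H B) {i : ℕ} (hi : i ∈ Finset.Icc 1 m) :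
    Xe n m r H B i ∩ Finset.Icc 1 (VB n B) = loPart m H i := by
  rw [Finset.mem_Icc] at hi
  rw [gp.Xe_eq (Finset.mem_Icc.mpr hi)]
  ext y
  simp only [Finset.mem_inter, Finset.mem_union, Finset.mem_Icc]
  constructor
  · rintro ⟨(h | h) | h, hy2⟩
    · exact h
    · exact absurd (gp.midZone y h).1 (by omega)
    · obtain ⟨x, hx, rfl⟩ := gp.hiPart_mem h hi.2
      have := (gp.tailZone x hx).1
      have := gp.twoVB
      omega
  · intro h
    have hyH := gp.loPart_subset hi.1 h
    have h1 := (Finset.mem_Icc.mp (gp.subH hyH)).1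
    exact ⟨Or.inl (Or.inl h), h1, gp.headLe y hyH⟩

lemma Xe_inter_mid (gp : GoodPair n m r H B) {i : ℕ} (hi : i ∈ Finset.Icc 1 m) :
    Xe n m r H B i ∩ Finset.Icc (VB n B + 1) (n - VB n B) = B := by
  rw [Finset.mem_Icc] at hi
  rw [gp.Xe_eq (Finset.mem_Icc.mpr hi)]
  ext y
  simp only [Finset.mem_inter, Finset.mem_union, Finset.mem_Icc]
  constructor
  · rintro ⟨(h | h) | h, hy2⟩
    · exact absurd (gp.headLe y (gp.loPart_subset hi.1 h)) (by omega)
    · exact h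
    · obtain ⟨x, hx, rfl⟩ := gp.hiPart_mem h hi.2
      have := (gp.tailZone x hx).1
      omega
  · intro h
    have := gp.midZone y h
    exact ⟨Or.inl (Or.inr h), by omega, this.2⟩

lemma Xe_inter_hi (gp : GoodPair n m r H B) {i : ℕ} (hi : i ∈ Finset.Icc 1 m) :
    Xe n m r H B i ∩ Finset.Icc (n - VB n B + 1) n = hiPart n H B i := by
  rw [Finset.mem_Icc] at hi
  rw [gp.Xe_eq (Finset.mem_Icc.mpr hi)]
  ext y
  simp only [Finset.mem_inter, Finset.mem_union, Finset.mem_Icc]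
  constructor
  · rintro ⟨(h | h) | h, hy2⟩
    · have := gp.headLe y (gp.loPart_subset hi.1 h)
      have := gp.twoVB
      omega
    · exact absurd (gp.midZone y h).2 (by omega)
    · exact h
  · intro h
    obtain ⟨x, hx, hxe⟩ := gp.hiPart_mem h hi.2
    have := gp.tailZone x hx
    exact ⟨Or.inr h, by omega, by omega⟩

lemma card_loPart (gp : GoodPair n m r H B) {i : ℕ} (hi : i ∈ Finset.Icc 1 m) :
    (loPart m H i).card = m - i := by
  rw [Finset.mem_Icc] at hi
  have hcH := gp.cardH
  rw [loPart, Finset.card_image_of_injOn, Nat.card_Icc]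
  · omega
  · apply Set.InjOn.mono _ (enum1_injOn H)
    intro t ht
    simp only [coe_Icc, Set.mem_Icc] at ht ⊢
    omega

lemma card_hiPart (gp : GoodPair n m r H B) {i : ℕ} (hi : i ∈ Finset.Icc 1 m) :
    (hiPart n H B i).card = i - 1 := by
  rw [Finset.mem_Icc] at hi
  have hcH := gp.cardH; have hm := gp.hm
  rw [hiPart, Finset.card_image_of_injOn, Nat.card_Icc]
  · omega
  · intro a ha b hb hab
    simp only [coe_Icc, Set.mem_Icc] at ha hb
    have hab' : enum1 H a + DD n B = enum1 H b + DD n B := hab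
    have : enum1 H a = enum1 H b := by omega
    exact enum1_injOn H (by simp only [coe_Icc, Set.mem_Icc]; omega)
      (by simp only [coe_Icc, Set.mem_Icc]; omega) this

end GoodPair

namespace GoodPair
variable {n m r : ℕ} {H B H' B' : Finset ℕ}

lemma Bsub_of_VB_le (gp : GoodPair n m r H B) (gp' : GoodPair n m r H' B')
    {i i' : ℕ} (hi : i ∈ Finset.Icc 1 m) (hi' : i' ∈ Finset.Icc 1 m)
    (hW : VB n B ≤ VB n B') (heq : Xe n m r H B i = Xe n m r H' B' i') : B' ⊆ B := by
  intro y hy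
  have hi2 := hi; have hi2' := hi'
  rw [Finset.mem_Icc] at hi2 hi2'
  have hyX : y ∈ Xe n m r H' B' i' := by
    rw [gp'.Xe_eq hi']
    exact Finset.mem_union_left _ (Finset.mem_union_right _ hy)
  rw [← heq] at hyX
  have hz := gp'.midZone y hy
  have h2 := gp'.twoVB
  have hmem : y ∈ Finset.Icc (VB n B + 1) (n - VB n B) := by rw [Finset.mem_Icc]; omega
  have := Finset.mem_inter.mpr ⟨hyX, hmem⟩
  rwa [gp.Xe_inter_mid hi] at this

lemma Xe_injective (gp : GoodPair n m r H B) (gp' : GoodPair n m r H' B')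
    {i i' : ℕ} (hi : i ∈ Finset.Icc 1 m) (hi' : i' ∈ Finset.Icc 1 m)
    (heq : Xe n m r H B i = Xe n m r H' B' i') : H = H' ∧ B = B' ∧ i = i' := by
  have hi2 := hi; have hi2' := hi'
  rw [Finset.mem_Icc] at hi2 hi2'
  have hBB' : B = B' := by
    rcases le_total (VB n B) (VB n B') with h | h
    · exact (Finset.eq_of_subset_of_card_le (gp.Bsub_of_VB_le gp' hi hi' h heq)
        (by rw [gp.cardB, gp'.cardB])).symm
    · exact Finset.eq_of_subset_of_card_le (gp'.Bsub_of_VB_le gp hi' hi h heq.symm)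
        (by rw [gp.cardB, gp'.cardB])
  have hW : VB n B = VB n B' := by rw [hBB']
  have hD : DD n B = DD n B' := by rw [hBB']
  have hlo : loPart m H i = loPart m H' i' := by
    rw [← gp.Xe_inter_lo hi, ← gp'.Xe_inter_lo hi', heq, hW]
  have hhi : hiPart n H B i = hiPart n H' B' i' := by
    rw [← gp.Xe_inter_hi hi, ← gp'.Xe_inter_hi hi', heq, hW]
  have hii' : i = i' := by
    have c1 := gp.card_loPart hi
    have c2 := gp'.card_loPart hi'
    rw [hlo, c2] at c1
    omega
  subst hii'
  have hiPart_eq : hiPart n H B i = ((Finset.Icc 1 (i-1)).image (enum1 H)).image (· + DD n B) := by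
    rw [hiPart, Finset.image_image]; rfl
  have hiPart_eq' : hiPart n H' B' i = ((Finset.Icc 1 (i-1)).image (enum1 H')).image (· + DD n B) := by
    rw [hiPart, Finset.image_image, hD]; rfl
  have himg : (Finset.Icc 1 (i-1)).image (enum1 H) = (Finset.Icc 1 (i-1)).image (enum1 H') := by
    apply Finset.image_injective (f := (· + DD n B)) (add_left_injective _)
    rw [← hiPart_eq, ← hiPart_eq', hhi]
  have hsplit : Finset.Icc 1 (m-1) = Finset.Icc 1 (i-1) ∪ Finset.Icc i (m-1) := by
    ext t; simp only [Finset.mem_union, Finset.mem_Icc]; omega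
  have hHH' : H = H' := by
    have e1 : H = (Finset.Icc 1 (m-1)).image (enum1 H) := by
      conv_lhs => rw [← enum1_image H, gp.cardH]
    have e2 : H' = (Finset.Icc 1 (m-1)).image (enum1 H') := by
      conv_lhs => rw [← enum1_image H', gp'.cardH]
    rw [e1, e2, hsplit, Finset.image_union, Finset.image_union, himg]
    have : (Finset.Icc i (m-1)).image (enum1 H) = (Finset.Icc i (m-1)).image (enum1 H') := hlo
    rw [this]
  exact ⟨hHH', hBB', rfl⟩

end GoodPair

/-! ### The packing -/

noncomputable def Dom (n m r : ℕ) : Finset (Finset ℕ × Finset ℕ) :=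
  (((Finset.Icc 1 n).powersetCard (m - 1)) ×ˢ ((Finset.Icc 1 n).powersetCard (r - m + 1))).filter
    (fun p => ∀ x ∈ p.1, ∀ y ∈ p.2, x < y ∧ x + y ≤ n)

lemma mem_Dom {n m r : ℕ} (hm : 1 ≤ m) (hmr : m ≤ r) {p : Finset ℕ × Finset ℕ} :
    p ∈ Dom n m r ↔ GoodPair n m r p.1 p.2 := by
  simp only [Dom, Finset.mem_filter, Finset.mem_product, Finset.mem_powersetCard]
  constructor
  · rintro ⟨⟨⟨h1, h2⟩, h3, h4⟩, h5⟩
    exact ⟨hm, hmr, h2, h4, h1, h3, h5⟩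
  · rintro ⟨_, _, h2, h4, h1, h3, h5⟩
    exact ⟨⟨⟨h1, h2⟩, h3, h4⟩, h5⟩

noncomputable def copyOf (n m r : ℕ) (p : Finset ℕ × Finset ℕ) : Finset (Finset ℕ) :=
  (Finset.Icc 1 m).image (fun i => Xe n m r p.1 p.2 i)

lemma copyOf_isCopy {n m r s : ℕ} {p : Finset ℕ × Finset ℕ} (gp : GoodPair n m r p.1 p.2)
    (hs : s = r + m - 1) : IsCopy n s (pathEdges r s) (copyOf n m r p) := by
  have hm := gp.hm; have hmr := gp.hmr
  refine ⟨fcop n m r p.1 p.2, by rw [hs]; exact gp.fcop_strictMono, by rw [hs]; exact gp.fcop_maps, ?_⟩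
  have hsr : s - r + 1 = m := by omega
  rw [pathEdges, hsr, Finset.image_image]
  rfl

lemma copyOf_mem_edge {n m r : ℕ} {p : Finset ℕ × Finset ℕ} {e : Finset ℕ}
    (he : e ∈ copyOf n m r p) : ∃ i ∈ Finset.Icc 1 m, e = Xe n m r p.1 p.2 i := by
  obtain ⟨i, hi, rfl⟩ := Finset.mem_image.mp he
  exact ⟨i, hi, rfl⟩

lemma copyOf_injOn {n m r : ℕ} {p q : Finset ℕ × Finset ℕ}
    (hp : GoodPair n m r p.1 p.2) (hq : GoodPair n m r q.1 q.2)
    (h : copyOf n m r p = copyOf n m r q) : p = q := by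
  have hm := hp.hm
  have h1 : Xe n m r p.1 p.2 1 ∈ copyOf n m r q := by
    rw [← h]
    exact Finset.mem_image_of_mem _ (Finset.mem_Icc.mpr ⟨le_refl 1, hm⟩)
  obtain ⟨i, hi, he⟩ := copyOf_mem_edge h1
  obtain ⟨hH, hB, -⟩ := hp.Xe_injective hq (Finset.mem_Icc.mpr ⟨le_refl 1, hm⟩) hi he
  exact Prod.ext hH hB

lemma copies_disjoint {n m r : ℕ} {p q : Finset ℕ × Finset ℕ}
    (hp : GoodPair n m r p.1 p.2) (hq : GoodPair n m r q.1 q.2)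
    (hne : copyOf n m r p ≠ copyOf n m r q) : Disjoint (copyOf n m r p) (copyOf n m r q) := by
  rw [Finset.disjoint_left]
  intro e hep heq
  obtain ⟨i, hi, rfl⟩ := copyOf_mem_edge hep
  obtain ⟨j, hj, he⟩ := copyOf_mem_edge heq
  obtain ⟨hH, hB, hij⟩ := hp.Xe_injective hq hi hj he
  exact hne (by rw [show p = q from Prod.ext hH hB])

noncomputable def Pack (n m r : ℕ) : Finset (Finset (Finset ℕ)) :=
  (Dom n m r).image (copyOf n m r)

lemma pack_isPacking {n m r s : ℕ} (hm : 1 ≤ m) (hmr : m ≤ r) (hs : s = r + m - 1) :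
    IsPacking n s (pathEdges r s) (Pack n m r) := by
  constructor
  · intro C hC
    obtain ⟨p, hp, rfl⟩ := Finset.mem_image.mp hC
    have gp := (mem_Dom hm hmr).mp hp
    exact copyOf_isCopy gp hs
  · intro C hC C' hC' hne
    obtain ⟨p, hp, rfl⟩ := Finset.mem_image.mp hC
    obtain ⟨q, hq, rfl⟩ := Finset.mem_image.mp hC'
    exact copies_disjoint ((mem_Dom hm hmr).mp hp) ((mem_Dom hm hmr).mp hq) hne

lemma card_Pack {n m r : ℕ} (hm : 1 ≤ m) (hmr : m ≤ r) :
    (Pack n m r).card = (Dom n m r).card := by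
  apply Finset.card_image_of_injOn
  intro p hp q hq h
  exact copyOf_injOn ((mem_Dom hm hmr).mp hp) ((mem_Dom hm hmr).mp hq) h

/-! ### generic facts about copies, packings, transversals -/

lemma pathEdges_spec {r s : ℕ} (hr : 1 ≤ r) (hrs : r ≤ s) {e : Finset ℕ} (he : e ∈ pathEdges r s) :
    e ⊆ Finset.Icc 1 s ∧ e.card = r := by
  obtain ⟨i, hi, rfl⟩ := Finset.mem_image.mp he
  rw [Finset.mem_Icc] at hi
  constructor
  · intro x hx
    rw [Finset.mem_Icc] at hx ⊢
    omega
  · rw [Nat.card_Icc]; omega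

lemma loosePathEdges_spec {r s : ℕ} (hr : 1 ≤ r) (hrs : r ≤ s) {e : Finset ℕ}
    (he : e ∈ loosePathEdges r s) : e ⊆ Finset.Icc 1 s ∧ e.card = r := by
  rw [loosePathEdges, Finset.mem_insert, Finset.mem_singleton] at he
  rcases he with rfl | rfl
  · exact ⟨fun x hx => by rw [Finset.mem_Icc] at hx ⊢; omega, by rw [Nat.card_Icc]; omega⟩
  · exact ⟨fun x hx => by rw [Finset.mem_Icc] at hx ⊢; omega, by rw [Nat.card_Icc]; omega⟩

lemma copy_edges_mem {n r s : ℕ} {E C : Finset (Finset ℕ)}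
    (hE : ∀ e₀ ∈ E, e₀ ⊆ Finset.Icc 1 s ∧ e₀.card = r)
    (hC : IsCopy n s E C) : ∀ e ∈ C, e ∈ (Finset.Icc 1 n).powersetCard r := by
  obtain ⟨f, hmono, hmaps, rfl⟩ := hC
  intro e he
  obtain ⟨e₀, he₀, rfl⟩ := Finset.mem_image.mp he
  obtain ⟨hsub, hcard⟩ := hE e₀ he₀
  rw [Finset.mem_powersetCard]
  constructor
  · intro y hy
    obtain ⟨v, hv, rfl⟩ := Finset.mem_image.mp hy
    exact hmaps v (hsub hv)
  · rw [Finset.card_image_of_injOn, hcard]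
    exact Set.InjOn.mono (fun v hv => by exact_mod_cast hsub hv) hmono.injOn

lemma packing_card_le_s2 {n r s : ℕ} {E : Finset (Finset ℕ)}
    (hE : ∀ e₀ ∈ E, e₀ ⊆ Finset.Icc 1 s ∧ e₀.card = r)
    {P : Finset (Finset (Finset ℕ))} (hP : IsPacking n s E P)
    {T : Finset (Finset ℕ)} (hT : ∀ C, IsCopy n s E C → ∃ e ∈ C, e ∈ T) :
    P.card ≤ T.card := by
  classical
  have hch : ∀ C ∈ P, ∃ e, e ∈ C ∧ e ∈ T := by
    intro C hC
    obtain ⟨e, he, het⟩ := hT C (hP.1 C hC)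
    exact ⟨e, he, het⟩
  choose g hg1 hg2 using hch
  rw [show P.card = (P.attach.image (fun C => g C.1 C.2)).card by
    rw [Finset.card_image_of_injOn, Finset.card_attach]
    intro C hC C' hC' h
    by_contra hne
    have hne' : (C : Finset (Finset ℕ)) ≠ C' := fun hc => hne (Subtype.ext hc)
    have hdisj := hP.2 C.1 C.2 C'.1 C'.2 hne'
    refine Finset.disjoint_left.mp hdisj (hg1 C.1 C.2) ?_
    have h' : g C.1 C.2 = g C'.1 C'.2 := h
    rw [h']
    exact hg1 C'.1 C'.2]
  apply Finset.card_le_card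
  intro e he
  obtain ⟨C, hC, rfl⟩ := Finset.mem_image.mp he
  exact hg2 C.1 C.2

lemma copy_has_edge {n r s : ℕ} {E C : Finset (Finset ℕ)}
    (hE : ∀ e₀ ∈ E, e₀ ⊆ Finset.Icc 1 s ∧ e₀.card = r) (hEne : E.Nonempty)
    (hC : IsCopy n s E C) : ∃ e ∈ C, e ∈ (Finset.Icc 1 n).powersetCard r := by
  obtain ⟨e₀, he₀⟩ := hEne
  obtain ⟨f, hmono, hmaps, hCe⟩ := hC
  refine ⟨e₀.image f, ?_, ?_⟩
  · rw [hCe]; exact Finset.mem_image_of_mem _ he₀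
  · exact copy_edges_mem hE ⟨f, hmono, hmaps, hCe⟩ _ (by rw [hCe]; exact Finset.mem_image_of_mem _ he₀)

lemma packing_sizes_bddAbove {n r s : ℕ} {E : Finset (Finset ℕ)}
    (hE : ∀ e₀ ∈ E, e₀ ⊆ Finset.Icc 1 s ∧ e₀.card = r) (hEne : E.Nonempty) :
    BddAbove {k | ∃ P : Finset (Finset (Finset ℕ)), IsPacking n s E P ∧ P.card = k} := by
  refine ⟨((Finset.Icc 1 n).powersetCard r).card, ?_⟩
  rintro k ⟨P, hP, rfl⟩
  exact packing_card_le_s2 hE hP (fun C hC => copy_has_edge hE hEne hC)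

lemma pathEdges_nonempty {r s : ℕ} (hrs : r ≤ s) : (pathEdges r s).Nonempty := by
  apply Finset.Nonempty.image
  rw [Finset.nonempty_Icc]
  omega

lemma loosePathEdges_nonempty {r s : ℕ} : (loosePathEdges r s).Nonempty :=
  Finset.insert_nonempty _ _

/-! ### counting helpers -/

lemma witness_lt {S : Finset ℕ} {m u u' : ℕ} (hS1 : ∀ y ∈ S, 1 ≤ y) (hu' : u' ∈ S)
    (hc : (S ∩ Finset.Icc 1 u).card = m) (hc' : (S ∩ Finset.Icc 1 u').card = m)
    (hlt : u < u') : False := by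
  have hsub : insert u' (S ∩ Finset.Icc 1 u) ⊆ S ∩ Finset.Icc 1 u' := by
    intro z hz
    rcases Finset.mem_insert.mp hz with rfl | hz
    · exact Finset.mem_inter.mpr ⟨hu', Finset.mem_Icc.mpr ⟨hS1 _ hu', le_refl _⟩⟩
    · rw [Finset.mem_inter, Finset.mem_Icc] at hz ⊢
      exact ⟨hz.1, hz.2.1, by omega⟩
  have hnotin : u' ∉ S ∩ Finset.Icc 1 u := by
    rw [Finset.mem_inter, Finset.mem_Icc]
    omega
  have := Finset.card_le_card hsub
  rw [Finset.card_insert_of_notMem hnotin, hc, hc'] at this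
  omega

lemma witness_unique {S : Finset ℕ} {m u u' : ℕ} (hS1 : ∀ y ∈ S, 1 ≤ y)
    (hu : u ∈ S) (hu' : u' ∈ S)
    (hc : (S ∩ Finset.Icc 1 u).card = m) (hc' : (S ∩ Finset.Icc 1 u').card = m) : u = u' := by
  rcases Nat.lt_trichotomy u u' with h | h | h
  · exact absurd (witness_lt hS1 hu' hc hc' h) id
  · exact h
  · exact absurd (witness_lt hS1 hu hc' hc h) id

lemma split_spec {n m r : ℕ} (hm : 1 ≤ m) {e : Finset ℕ} (hsub : e ⊆ Finset.Icc 1 n)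
    (hcard : e.card = r) {u : ℕ} (hu : u ∈ e) (hcnt : (e ∩ Finset.Icc 1 u).card = m)
    (hub : ∀ y ∈ e, u + y ≤ n + 1) :
    GoodPair n m r ((e ∩ Finset.Icc 1 u).erase u) (e \ (e ∩ Finset.Icc 1 u).erase u) ∧
    ((e ∩ Finset.Icc 1 u).erase u) ∪ (e \ (e ∩ Finset.Icc 1 u).erase u) = e ∧
    u ∈ e \ (e ∩ Finset.Icc 1 u).erase u ∧
    (∀ z ∈ e \ (e ∩ Finset.Icc 1 u).erase u, u ≤ z) := by
  set H := (e ∩ Finset.Icc 1 u).erase u with hH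
  set B := e \ H with hB
  have hu1 : 1 ≤ u := (Finset.mem_Icc.mp (hsub hu)).1
  have huin : u ∈ e ∩ Finset.Icc 1 u :=
    Finset.mem_inter.mpr ⟨hu, Finset.mem_Icc.mpr ⟨hu1, le_refl u⟩⟩
  have hHsub : H ⊆ e := Finset.Subset.trans (Finset.erase_subset _ _) Finset.inter_subset_left
  have hcardH : H.card = m - 1 := by
    rw [hH, Finset.card_erase_of_mem huin, hcnt]
  have hmr : m ≤ r := by
    have : (e ∩ Finset.Icc 1 u).card ≤ e.card := Finset.card_le_card Finset.inter_subset_left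
    omega
  have hcardB : B.card = r - m + 1 := by
    rw [hB, Finset.card_sdiff_of_subset hHsub, hcard, hcardH]
    omega
  have hmemH : ∀ x ∈ H, x ∈ e ∧ x < u := by
    intro x hx
    rw [hH, Finset.mem_erase, Finset.mem_inter, Finset.mem_Icc] at hx
    exact ⟨hx.2.1, by omega⟩
  have hmemB : ∀ z ∈ B, z ∈ e ∧ u ≤ z := by
    intro z hz
    rw [hB, Finset.mem_sdiff] at hz
    refine ⟨hz.1, ?_⟩
    by_contra hlt
    have h1z : 1 ≤ z := (Finset.mem_Icc.mp (hsub hz.1)).1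
    exact hz.2 (by
      rw [hH, Finset.mem_erase, Finset.mem_inter, Finset.mem_Icc]
      exact ⟨by omega, hz.1, by omega⟩)
  have huB : u ∈ B := by
    rw [hB, Finset.mem_sdiff]
    exact ⟨hu, Finset.notMem_erase _ _⟩
  refine ⟨?_, ?_, huB, fun z hz => (hmemB z hz).2⟩
  · refine ⟨hm, hmr, hcardH, hcardB, fun x hx => hsub (hmemH x hx).1,
      fun z hz => hsub (hmemB z hz).1, ?_⟩
    intro x hx y hy
    obtain ⟨hxe, hxu⟩ := hmemH x hx
    obtain ⟨hye, hyu⟩ := hmemB y hy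
    have := hub y hye
    exact ⟨by omega, by omega⟩
  · rw [hB, Finset.union_sdiff_of_subset hHsub]

lemma bottom_char {n m r : ℕ} {H B : Finset ℕ} (gp : GoodPair n m r H B) :
    ∀ x, x ∈ H ↔ (x ∈ H ∪ B ∧ ((H ∪ B) ∩ Finset.Icc 1 x).card ≤ m - 1) := by
  intro x
  constructor
  · intro hx
    refine ⟨Finset.mem_union_left _ hx, ?_⟩
    have hsub : (H ∪ B) ∩ Finset.Icc 1 x ⊆ H := by
      intro z hz
      rw [Finset.mem_inter, Finset.mem_union, Finset.mem_Icc] at hz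
      rcases hz.1 with h | h
      · exact h
      · exact absurd (gp.cross x hx z h).1 (by omega)
    have := Finset.card_le_card hsub
    rw [gp.cardH] at this
    exact this
  · rintro ⟨hxe, hcd⟩
    rcases Finset.mem_union.mp hxe with h | h
    · exact h
    · exfalso
      have hxH : x ∉ H := by
        intro hxH
        exact absurd (gp.cross x hxH x h).1 (lt_irrefl x)
      have hsub : insert x H ⊆ (H ∪ B) ∩ Finset.Icc 1 x := by
        intro z hz
        rcases Finset.mem_insert.mp hz with rfl | hz
        · exact Finset.mem_inter.mpr ⟨Finset.mem_union_right _ h,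
            Finset.mem_Icc.mpr ⟨(Finset.mem_Icc.mp (gp.subB h)).1, le_refl _⟩⟩
        · refine Finset.mem_inter.mpr ⟨Finset.mem_union_left _ hz, Finset.mem_Icc.mpr
            ⟨(Finset.mem_Icc.mp (gp.subH hz)).1, le_of_lt (gp.cross z hz x h).1⟩⟩
      have := Finset.card_le_card hsub
      rw [Finset.card_insert_of_notMem hxH, gp.cardH] at this
      have hm := gp.hm
      omega

lemma decomp_unique {n m r : ℕ} {p q : Finset ℕ × Finset ℕ}
    (gp : GoodPair n m r p.1 p.2) (gq : GoodPair n m r q.1 q.2)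
    (h : p.1 ∪ p.2 = q.1 ∪ q.2) : p = q := by
  have hH : p.1 = q.1 := by
    ext x
    rw [bottom_char gp, bottom_char gq, h]
  have hdp : Disjoint p.1 p.2 := by
    rw [Finset.disjoint_left]
    intro x h1 h2
    exact absurd (gp.cross x h1 x h2).1 (lt_irrefl x)
  have hdq : Disjoint q.1 q.2 := by
    rw [Finset.disjoint_left]
    intro x h1 h2
    exact absurd (gq.cross x h1 x h2).1 (lt_irrefl x)
  have hB : p.2 = q.2 := by
    have e1 : (p.1 ∪ p.2) \ p.1 = p.2 := Finset.union_sdiff_cancel_left hdp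
    have e2 : (q.1 ∪ q.2) \ q.1 = q.2 := Finset.union_sdiff_cancel_left hdq
    rw [← e1, ← e2, h, hH]
  exact Prod.ext hH hB

/-! ### mirror map -/

def mir (n y : ℕ) : ℕ := n + 1 - y

lemma mir_image_subset {n : ℕ} {S : Finset ℕ} (hS : S ⊆ Finset.Icc 1 n) :
    S.image (mir n) ⊆ Finset.Icc 1 n := by
  intro y hy
  obtain ⟨z, hz, rfl⟩ := Finset.mem_image.mp hy
  have := Finset.mem_Icc.mp (hS hz)
  rw [Finset.mem_Icc, mir]
  omega

lemma mir_card {n : ℕ} {S : Finset ℕ} (hS : S ⊆ Finset.Icc 1 n) :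
    (S.image (mir n)).card = S.card := by
  apply Finset.card_image_of_injOn
  intro a ha b hb hab
  have h1 := Finset.mem_Icc.mp (hS ha)
  have h2 := Finset.mem_Icc.mp (hS hb)
  rw [mir, mir] at hab
  omega

lemma mir_invol {n : ℕ} {S : Finset ℕ} (hS : S ⊆ Finset.Icc 1 n) :
    (S.image (mir n)).image (mir n) = S := by
  rw [Finset.image_image]
  have : ∀ x ∈ S, (mir n ∘ mir n) x = id x := by
    intro x hx
    have := Finset.mem_Icc.mp (hS hx)
    simp only [Function.comp_apply, mir, id]
    omega
  rw [Finset.image_congr this, Finset.image_id]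

/-! ### the three classes -/

def PredL (n : ℕ) (B : Finset ℕ) : Prop := ∃ y ∈ B, ∀ z ∈ B, y + z ≤ n
def PredM (n : ℕ) (B : Finset ℕ) : Prop :=
  (∃ y ∈ B, ∀ z ∈ B, y + z ≤ n + 1) ∧ ¬ PredL n B
def PredW (n : ℕ) (B : Finset ℕ) : Prop := ∃ y ∈ B, ∀ z ∈ B, n + 2 ≤ y + z

noncomputable def Ldom (n m r : ℕ) : Finset (Finset ℕ × Finset ℕ) :=
  (Dom n m r).filter (fun p => PredL n p.2)
noncomputable def Mdom (n m r : ℕ) : Finset (Finset ℕ × Finset ℕ) :=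
  (Dom n m r).filter (fun p => PredM n p.2)
noncomputable def Wdom (n m r : ℕ) : Finset (Finset ℕ × Finset ℕ) :=
  (Dom n m r).filter (fun p => PredW n p.2)

lemma dom_partition {n m r : ℕ} (hm : 1 ≤ m) (hmr : m ≤ r) :
    (Dom n m r).card = (Ldom n m r).card + (Mdom n m r).card + (Wdom n m r).card := by
  have hLM : Disjoint (Ldom n m r) (Mdom n m r) := by
    rw [Finset.disjoint_left]
    intro p hp hq
    exact ((Finset.mem_filter.mp hq).2).2 (Finset.mem_filter.mp hp).2
  have hLW : Disjoint (Ldom n m r) (Wdom n m r) := by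
    rw [Finset.disjoint_left]
    intro p hp hq
    obtain ⟨y, hy, hally⟩ := (Finset.mem_filter.mp hp).2
    obtain ⟨w, hw, hallw⟩ := (Finset.mem_filter.mp hq).2
    have h1 := hally w hw
    have h2 := hallw y hy
    omega
  have hMW : Disjoint (Mdom n m r) (Wdom n m r) := by
    rw [Finset.disjoint_left]
    intro p hp hq
    obtain ⟨⟨y, hy, hally⟩, -⟩ := (Finset.mem_filter.mp hp).2
    obtain ⟨w, hw, hallw⟩ := (Finset.mem_filter.mp hq).2
    have h1 := hally w hw
    have h2 := hallw y hy
    omega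
  have hunion : Dom n m r = Ldom n m r ∪ Mdom n m r ∪ Wdom n m r := by
    apply Finset.Subset.antisymm
    · intro p hp
      have gp := (mem_Dom hm hmr).mp hp
      have hne := gp.Bne
      set y0 := p.2.min' hne
      set y1 := p.2.max' hne
      have hy0 : y0 ∈ p.2 := p.2.min'_mem hne
      have hy1 : y1 ∈ p.2 := p.2.max'_mem hne
      simp only [Finset.mem_union, Ldom, Mdom, Wdom, Finset.mem_filter]
      rcases Nat.lt_or_ge (y0 + y1) (n + 1) with h | h
      · exact Or.inl (Or.inl ⟨hp, y0, hy0, fun z hz => by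
          have := p.2.le_max' z hz; omega⟩)
      · rcases Nat.lt_or_ge (y0 + y1) (n + 2) with h2 | h2
        · refine Or.inl (Or.inr ⟨hp, ⟨y0, hy0, fun z hz => by
            have := p.2.le_max' z hz; omega⟩, ?_⟩)
          rintro ⟨y, hy, hall⟩
          have := hall y1 hy1
          have := p.2.min'_le y hy
          omega
        · exact Or.inr ⟨hp, y1, hy1, fun z hz => by
            have := p.2.min'_le z hz; omega⟩
    · intro p hp
      simp only [Finset.mem_union, Ldom, Mdom, Wdom, Finset.mem_filter] at hp
      rcases hp with (h | h) | h <;> exact h.1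
  rw [hunion, Finset.card_union_of_disjoint, Finset.card_union_of_disjoint hLM]
  rw [Finset.disjoint_union_left]
  exact ⟨hLW, hMW⟩

lemma goodPair_mir {n m r : ℕ} {H B : Finset ℕ} (gp : GoodPair n m r H B) :
    GoodPair n m r H (B.image (mir n)) := by
  refine ⟨gp.hm, gp.hmr, gp.cardH, ?_, gp.subH, mir_image_subset gp.subB, ?_⟩
  · rw [mir_card gp.subB, gp.cardB]
  · intro x hx y hy
    obtain ⟨z, hz, rfl⟩ := Finset.mem_image.mp hy
    obtain ⟨h1, h2⟩ := gp.cross x hx z hz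
    have h3 := Finset.mem_Icc.mp (gp.subB hz)
    have h4 := Finset.mem_Icc.mp (gp.subH hx)
    rw [mir]
    omega

lemma card_Wdom_eq_Ldom {n m r : ℕ} (hm : 1 ≤ m) (hmr : m ≤ r) :
    (Wdom n m r).card = (Ldom n m r).card := by
  apply Finset.card_bij' (i := fun p _ => (p.1, p.2.image (mir n)))
    (j := fun q _ => (q.1, q.2.image (mir n)))
  · rintro ⟨H, B⟩ hp
    have gp := (mem_Dom hm hmr).mp (Finset.mem_filter.mp hp).1
    simp only [Prod.mk.injEq]
    exact ⟨trivial, mir_invol gp.subB⟩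
  · rintro ⟨H, B⟩ hq
    have gq := (mem_Dom hm hmr).mp (Finset.mem_filter.mp hq).1
    simp only [Prod.mk.injEq]
    exact ⟨trivial, mir_invol gq.subB⟩

  · rintro ⟨H, B⟩ hp
    simp only [Wdom, Finset.mem_filter] at hp
    obtain ⟨hdom, w, hw, hallw⟩ := hp
    have gp := (mem_Dom hm hmr).mp hdom
    simp only [Ldom, Finset.mem_filter]
    constructor
    · exact (mem_Dom hm hmr).mpr (goodPair_mir gp)
    · refine ⟨mir n w, Finset.mem_image_of_mem _ hw, ?_⟩
      intro z' hz'
      obtain ⟨z, hz, rfl⟩ := Finset.mem_image.mp hz'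
      have h1 := hallw z hz
      have h2 := Finset.mem_Icc.mp (gp.subB hz)
      have h3 := Finset.mem_Icc.mp (gp.subB hw)
      rw [mir, mir]
      omega
  · rintro ⟨H, B⟩ hq
    simp only [Ldom, Finset.mem_filter] at hq
    obtain ⟨hdom, w, hw, hallw⟩ := hq
    have gp := (mem_Dom hm hmr).mp hdom
    simp only [Wdom, Finset.mem_filter]
    constructor
    · exact (mem_Dom hm hmr).mpr (goodPair_mir gp)
    · refine ⟨mir n w, Finset.mem_image_of_mem _ hw, ?_⟩
      intro z' hz'
      obtain ⟨z, hz, rfl⟩ := Finset.mem_image.mp hz'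
      have h1 := hallw z hz
      have h2 := Finset.mem_Icc.mp (gp.subB hz)
      have h3 := Finset.mem_Icc.mp (gp.subB hw)
      rw [mir, mir]
      omega
/-! ### correspondence with biased sets -/

noncomputable def L0 (n r m : ℕ) : Finset (Finset ℕ) :=
  ((Finset.Icc 1 n).powersetCard r).filter (LeftBiased n m)

def MidB (n m : ℕ) (e : Finset ℕ) : Prop :=
  (∃ u ∈ e, (e ∩ Finset.Icc 1 u).card = m ∧ ∀ y ∈ e, u + y ≤ n + 1) ∧ ¬ LeftBiased n m e

noncomputable def M0 (n r m : ℕ) : Finset (Finset ℕ) :=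
  ((Finset.Icc 1 n).powersetCard r).filter (MidB n m)

noncomputable def R0 (n r m : ℕ) : Finset (Finset ℕ) :=
  ((Finset.Icc 1 n).powersetCard r).filter (fun e => LeftBiased n m (e.image (mir n)))

lemma hcount_eq_L0 (n r m : ℕ) : hcount n r m = (L0 n r m).card := rfl

lemma count_at_minB {n m r : ℕ} {H B : Finset ℕ} (gp : GoodPair n m r H B) :
    ((H ∪ B) ∩ Finset.Icc 1 (B.min' gp.Bne)).card = m := by
  have hmin := B.min'_mem gp.Bne
  have h1min := (Finset.mem_Icc.mp (gp.subB hmin)).1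
  have hminH : B.min' gp.Bne ∉ H := fun hc =>
    absurd (gp.cross _ hc _ hmin).1 (lt_irrefl _)
  have h1 : (H ∪ B) ∩ Finset.Icc 1 (B.min' gp.Bne) = insert (B.min' gp.Bne) H := by
    ext z
    rw [Finset.mem_inter, Finset.mem_union, Finset.mem_Icc, Finset.mem_insert]
    constructor
    · rintro ⟨h | h, h1, h2⟩
      · exact Or.inr h
      · exact Or.inl (le_antisymm h2 (B.min'_le z h))
    · rintro (rfl | h)
      · exact ⟨Or.inr hmin, h1min, le_refl _⟩
      · exact ⟨Or.inl h, (Finset.mem_Icc.mp (gp.subH h)).1,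
          le_of_lt (gp.cross z h _ hmin).1⟩
  rw [h1, Finset.card_insert_of_notMem hminH, gp.cardH]
  have := gp.hm
  omega

lemma goodPair_union_mem {n m r : ℕ} {H B : Finset ℕ} (gp : GoodPair n m r H B) :
    H ∪ B ∈ (Finset.Icc 1 n).powersetCard r := by
  rw [Finset.mem_powersetCard]
  have hdisj : Disjoint H B := by
    rw [Finset.disjoint_left]
    intro x h1 h2
    exact absurd (gp.cross x h1 x h2).1 (lt_irrefl x)
  refine ⟨Finset.union_subset gp.subH gp.subB, ?_⟩
  rw [Finset.card_union_of_disjoint hdisj, gp.cardH, gp.cardB]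
  have := gp.hm; have := gp.hmr
  omega

lemma goodPair_one_le {n m r : ℕ} {H B : Finset ℕ} (gp : GoodPair n m r H B) :
    ∀ y ∈ H ∪ B, 1 ≤ y := by
  intro y hy
  rcases Finset.mem_union.mp hy with h | h
  · exact (Finset.mem_Icc.mp (gp.subH h)).1
  · exact (Finset.mem_Icc.mp (gp.subB h)).1

lemma card_Ldom_eq {n m r : ℕ} (hm : 1 ≤ m) (hmr : m ≤ r) :
    (Ldom n m r).card = hcount n r m := by
  rw [hcount_eq_L0]
  apply Finset.card_bij (i := fun p _ => p.1 ∪ p.2)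
  · rintro ⟨H, B⟩ hp
    simp only [Ldom, Finset.mem_filter] at hp
    obtain ⟨hdom, y₀, hy₀, hall⟩ := hp
    have gp := (mem_Dom hm hmr).mp hdom
    simp only [L0, Finset.mem_filter]
    refine ⟨goodPair_union_mem gp, ?_⟩
    rw [leftBiased_iff_mybias hm (Finset.union_subset gp.subH gp.subB)]
    refine ⟨B.min' gp.Bne, Finset.mem_union_right _ (B.min'_mem gp.Bne),
      count_at_minB gp, ?_⟩
    intro y hy
    rcases Finset.mem_union.mp hy with h | h
    · have := (gp.cross y h _ (B.min'_mem gp.Bne)).2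
      omega
    · have h1 := hall y h
      have h2 := B.min'_le y₀ hy₀
      omega
  · rintro ⟨H, B⟩ hp ⟨H', B'⟩ hq h
    exact decomp_unique ((mem_Dom hm hmr).mp (Finset.mem_filter.mp hp).1)
      ((mem_Dom hm hmr).mp (Finset.mem_filter.mp hq).1) h
  · intro e he
    simp only [L0, Finset.mem_filter, Finset.mem_powersetCard] at he
    obtain ⟨⟨hsub, hcard⟩, hLB⟩ := he
    obtain ⟨u, hu, hcnt, hub⟩ := (leftBiased_iff_mybias hm hsub).mp hLB
    obtain ⟨gp₀, hun, huB, hge⟩ :=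
      split_spec hm hsub hcard hu hcnt (fun y hy => by have := hub y hy; omega)
    refine ⟨((e ∩ Finset.Icc 1 u).erase u, e \ (e ∩ Finset.Icc 1 u).erase u), ?_, hun⟩
    simp only [Ldom, Finset.mem_filter]
    refine ⟨(mem_Dom hm hmr).mpr gp₀, u, huB, ?_⟩
    intro z hz
    exact hub z (Finset.mem_sdiff.mp hz).1

lemma card_Mdom_eq_M0 {n m r : ℕ} (hm : 1 ≤ m) (hmr : m ≤ r) :
    (Mdom n m r).card = (M0 n r m).card := by
  apply Finset.card_bij (i := fun p _ => p.1 ∪ p.2)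
  · rintro ⟨H, B⟩ hp
    simp only [Mdom, Finset.mem_filter] at hp
    obtain ⟨hdom, ⟨y₀, hy₀, hall⟩, hnL⟩ := hp
    have gp := (mem_Dom hm hmr).mp hdom
    simp only [M0, Finset.mem_filter]
    refine ⟨goodPair_union_mem gp, ?_, ?_⟩
    · refine ⟨B.min' gp.Bne, Finset.mem_union_right _ (B.min'_mem gp.Bne),
        count_at_minB gp, ?_⟩
      intro y hy
      rcases Finset.mem_union.mp hy with h | h
      · have := (gp.cross y h _ (B.min'_mem gp.Bne)).2
        omega
      · have h1 := hall y h
        have h2 := B.min'_le y₀ hy₀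
        omega
    · intro hLB
      obtain ⟨w, hw, hcw, hubw⟩ :=
        (leftBiased_iff_mybias hm (Finset.union_subset gp.subH gp.subB)).mp hLB
      have hweq : w = B.min' gp.Bne :=
        witness_unique (goodPair_one_le gp) hw
          (Finset.mem_union_right _ (B.min'_mem gp.Bne)) hcw (count_at_minB gp)
      refine hnL ⟨B.min' gp.Bne, B.min'_mem gp.Bne, ?_⟩
      intro z hz
      have := hubw z (Finset.mem_union_right _ hz)
      omega
  · rintro ⟨H, B⟩ hp ⟨H', B'⟩ hq h
    exact decomp_unique ((mem_Dom hm hmr).mp (Finset.mem_filter.mp hp).1)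
      ((mem_Dom hm hmr).mp (Finset.mem_filter.mp hq).1) h
  · intro e he
    simp only [M0, Finset.mem_filter, Finset.mem_powersetCard] at he
    obtain ⟨⟨hsub, hcard⟩, ⟨u, hu, hcnt, hub⟩, hnLB⟩ := he
    obtain ⟨gp₀, hun, huB, hge⟩ := split_spec hm hsub hcard hu hcnt hub
    refine ⟨((e ∩ Finset.Icc 1 u).erase u, e \ (e ∩ Finset.Icc 1 u).erase u), ?_, hun⟩
    simp only [Mdom, Finset.mem_filter]
    refine ⟨(mem_Dom hm hmr).mpr gp₀, ⟨u, huB, fun z hz => hub z (Finset.mem_sdiff.mp hz).1⟩, ?_⟩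
    rintro ⟨y₀, hy₀, hall⟩
    apply hnLB
    rw [leftBiased_iff_mybias hm hsub]
    refine ⟨u, hu, hcnt, ?_⟩
    intro y hy
    rw [← hun] at hy
    rcases Finset.mem_union.mp hy with h | h
    · have := (gp₀.cross y h u huB).2
      omega
    · have h1 := hall y h
      have h2 := hge y₀ hy₀
      omega

lemma max_unbot'_spec {e : Finset ℕ} (he : e.Nonempty) :
    WithBot.unbotD 0 e.max ∈ e ∧ ∀ z ∈ e, z ≤ WithBot.unbotD 0 e.max := by
  have h : (↑(e.max' he) : WithBot ℕ) = e.max := Finset.coe_max' he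
  have h2 : WithBot.unbotD 0 e.max = e.max' he := by rw [← h]; rfl
  rw [h2]
  exact ⟨e.max'_mem he, fun z hz => e.le_max' z hz⟩


lemma erase_inter_Icc {e : Finset ℕ} {a u : ℕ} (hau : u < a) :
    e.erase a ∩ Finset.Icc 1 u = e ∩ Finset.Icc 1 u := by
  ext z
  simp only [Finset.mem_inter, Finset.mem_erase, Finset.mem_Icc]
  constructor
  · rintro ⟨⟨-, h1⟩, h2⟩; exact ⟨h1, h2⟩
  · rintro ⟨h1, h2⟩; exact ⟨⟨by omega, h1⟩, h2⟩

lemma insert_inter_Icc {e : Finset ℕ} {a u : ℕ} (hau : u < a) :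
    insert a e ∩ Finset.Icc 1 u = e ∩ Finset.Icc 1 u := by
  ext z
  simp only [Finset.mem_inter, Finset.mem_insert, Finset.mem_Icc]
  constructor
  · rintro ⟨rfl | h1, h2⟩
    · omega
    · exact ⟨h1, h2⟩
  · rintro ⟨h1, h2⟩; exact ⟨Or.inr h1, h2⟩

lemma M0_struct {n r m : ℕ} (hev : Even n) (hm : 1 ≤ m) {e : Finset ℕ}
    (he : e ∈ M0 n r m) :
    e ⊆ Finset.Icc 1 n ∧ e.card = r ∧
    ∃ u, u ∈ e ∧ (e ∩ Finset.Icc 1 u).card = m ∧ (∀ y ∈ e, u + y ≤ n + 1) ∧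
      u + WithBot.unbotD 0 e.max = n + 1 ∧ 2 * u ≤ n := by
  simp only [M0, Finset.mem_filter, Finset.mem_powersetCard] at he
  obtain ⟨⟨hsub, hcard⟩, ⟨u, hu, hcnt, hub⟩, hnLB⟩ := he
  have hne : e.Nonempty := ⟨u, hu⟩
  obtain ⟨hmax_mem, hmax_ge⟩ := max_unbot'_spec hne
  refine ⟨hsub, hcard, u, hu, hcnt, hub, ?_, ?_⟩
  · -- u + max = n + 1
    have h1 : u + WithBot.unbotD 0 e.max ≤ n + 1 := hub _ hmax_mem
    have h2 : ¬ (∀ y ∈ e, u + y ≤ n) := by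
      intro hall
      exact hnLB ((leftBiased_iff_mybias hm hsub).mpr ⟨u, hu, hcnt, hall⟩)
    push_neg at h2
    obtain ⟨y, hy, hgt⟩ := h2
    have := hmax_ge y hy
    omega
  · -- 2u ≤ n
    have := hub u hu
    obtain ⟨c, rfl⟩ := hev
    omega

lemma card_M0_eq {n r m : ℕ} (hev : Even n) (hm : 1 ≤ m) (hmr : m ≤ r) (hr : 1 ≤ r) :
    (M0 n r m).card = hcount n (r - 1) m := by
  rcases eq_or_lt_of_le hmr with hmr' | hmr'
  · -- m = r : both sides are zero
    have hM0 : M0 n r m = ∅ := by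
      rw [Finset.eq_empty_iff_forall_notMem]
      intro e he
      obtain ⟨hsub, hcard, u, hu, hcnt, hub, hsum, h2u⟩ := M0_struct hev hm he
      have hsube : e ∩ Finset.Icc 1 u ⊆ e := Finset.inter_subset_left
      have heq : e ∩ Finset.Icc 1 u = e :=
        Finset.eq_of_subset_of_card_le hsube (by omega)
      have hmax_mem := (max_unbot'_spec ⟨u, hu⟩).1
      have hmax_ge := (max_unbot'_spec ⟨u, hu⟩).2 u hu
      have : WithBot.unbotD 0 e.max ∈ e ∩ Finset.Icc 1 u := by rw [heq]; exact hmax_mem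
      rw [Finset.mem_inter, Finset.mem_Icc] at this
      omega
    rw [hM0, Finset.card_empty, hcount_eq_L0]
    symm
    rw [Finset.card_eq_zero, Finset.eq_empty_iff_forall_notMem]
    intro e' he'
    simp only [L0, Finset.mem_filter, Finset.mem_powersetCard] at he'
    obtain ⟨⟨hsub, hcard⟩, hLB⟩ := he'
    obtain ⟨u, hu, hcnt, hub⟩ := (leftBiased_iff_mybias hm hsub).mp hLB
    have : (e' ∩ Finset.Icc 1 u).card ≤ e'.card := Finset.card_le_card Finset.inter_subset_left
    omega
  · -- m < r
    rw [hcount_eq_L0]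
    apply Finset.card_bij (i := fun e _ => e.erase (WithBot.unbotD 0 e.max))
    · intro e he
      obtain ⟨hsub, hcard, u, hu, hcnt, hub, hsum, h2u⟩ := M0_struct hev hm he
      have hne : e.Nonempty := ⟨u, hu⟩
      obtain ⟨hmax_mem, hmax_ge⟩ := max_unbot'_spec hne
      have hune : u ≠ WithBot.unbotD 0 e.max := by omega
      simp only [L0, Finset.mem_filter, Finset.mem_powersetCard]
      refine ⟨⟨Finset.Subset.trans (Finset.erase_subset _ _) hsub, ?_⟩, ?_⟩
      · rw [Finset.card_erase_of_mem hmax_mem, hcard]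
      · rw [leftBiased_iff_mybias hm (Finset.Subset.trans (Finset.erase_subset _ _) hsub)]
        refine ⟨u, Finset.mem_erase.mpr ⟨hune, hu⟩, ?_, ?_⟩
        · rw [erase_inter_Icc (by omega), hcnt]
        · intro y hy
          rw [Finset.mem_erase] at hy
          have h1 := hub y hy.2
          have h2 := hmax_ge y hy.2
          have h3 := hy.1
          omega
    · intro e hep f heq h
      obtain ⟨hsub, hcard, u, hu, hcnt, hub, hsum, h2u⟩ := M0_struct hev hm hep
      obtain ⟨hsub', hcard', u', hu', hcnt', hub', hsum', h2u'⟩ := M0_struct hev hm heq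
      have hne : e.Nonempty := ⟨u, hu⟩
      have hne' : f.Nonempty := ⟨u', hu'⟩
      obtain ⟨hmax_mem, hmax_ge⟩ := max_unbot'_spec hne
      obtain ⟨hmax_mem', hmax_ge'⟩ := max_unbot'_spec hne'
      have hune : u ≠ WithBot.unbotD 0 e.max := by omega
      have hune' : u' ≠ WithBot.unbotD 0 f.max := by omega
      -- u and u' are witnesses in the common erased set
      have hmemu : u ∈ e.erase (WithBot.unbotD 0 e.max) := Finset.mem_erase.mpr ⟨hune, hu⟩
      have hmemu' : u' ∈ f.erase (WithBot.unbotD 0 f.max) := Finset.mem_erase.mpr ⟨hune', hu'⟩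
      have hcnt2 : (e.erase (WithBot.unbotD 0 e.max) ∩ Finset.Icc 1 u).card = m := by
        rw [erase_inter_Icc (by omega), hcnt]
      have hcnt2' : (f.erase (WithBot.unbotD 0 f.max) ∩ Finset.Icc 1 u').card = m := by
        rw [erase_inter_Icc (by omega), hcnt']
      have huu' : u = u' := by
        apply witness_unique (S := e.erase (WithBot.unbotD 0 e.max)) (m := m)
        · intro y hy
          exact (Finset.mem_Icc.mp (hsub (Finset.mem_erase.mp hy).2)).1
        · exact hmemu
        · rw [h]; exact hmemu'
        · exact hcnt2
        · rw [h]; exact hcnt2'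
      have hmaxeq : WithBot.unbotD 0 e.max = WithBot.unbotD 0 f.max := by omega
      have : e = insert (WithBot.unbotD 0 e.max) (e.erase (WithBot.unbotD 0 e.max)) :=
        (Finset.insert_erase hmax_mem).symm
      rw [this, h, hmaxeq, Finset.insert_erase hmax_mem']
    · intro e' he'
      simp only [L0, Finset.mem_filter, Finset.mem_powersetCard] at he'
      obtain ⟨⟨hsub, hcard⟩, hLB⟩ := he'
      obtain ⟨u, hu, hcnt, hub⟩ := (leftBiased_iff_mybias hm hsub).mp hLB
      have hu1 : 1 ≤ u := (Finset.mem_Icc.mp (hsub hu)).1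
      have hun : u ≤ n := (Finset.mem_Icc.mp (hsub hu)).2
      have h2u : 2 * u ≤ n := by have := hub u hu; omega
      have hnotin : n + 1 - u ∉ e' := by
        intro hc
        have := hub _ hc
        omega
      refine ⟨insert (n + 1 - u) e', ?_, ?_⟩
      · simp only [M0, Finset.mem_filter, Finset.mem_powersetCard]
        have hsub2 : insert (n + 1 - u) e' ⊆ Finset.Icc 1 n := by
          intro z hz
          rcases Finset.mem_insert.mp hz with rfl | hz
          · rw [Finset.mem_Icc]; omega
          · exact hsub hz
        have hicc : insert (n + 1 - u) e' ∩ Finset.Icc 1 u = e' ∩ Finset.Icc 1 u :=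
          insert_inter_Icc (by omega)
        refine ⟨⟨hsub2, ?_⟩, ⟨u, Finset.mem_insert_of_mem hu, ?_, ?_⟩, ?_⟩
        · rw [Finset.card_insert_of_notMem hnotin, hcard]; omega
        · rw [hicc, hcnt]
        · intro y hy
          rcases Finset.mem_insert.mp hy with rfl | hy
          · omega
          · have := hub y hy; omega
        · intro hLB2
          obtain ⟨w, hw, hcw, hubw⟩ := (leftBiased_iff_mybias hm hsub2).mp hLB2
          have hwn : w + (n + 1 - u) ≤ n := hubw _ (Finset.mem_insert_self _ _)
          have hwu : w < u := by omega
          have hweq : w = u := by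
            apply witness_unique (S := insert (n + 1 - u) e') (m := m)
            · intro y hy
              rcases Finset.mem_insert.mp hy with rfl | hy
              · omega
              · exact (Finset.mem_Icc.mp (hsub hy)).1
            · exact hw
            · exact Finset.mem_insert_of_mem hu
            · exact hcw
            · rw [hicc, hcnt]
          omega
      · -- erasing the max recovers e'
        have hmax : WithBot.unbotD 0 (insert (n + 1 - u) e').max = n + 1 - u := by
          have hne2 : (insert (n + 1 - u) e').Nonempty := Finset.insert_nonempty _ _
          obtain ⟨hmm, hmg⟩ := max_unbot'_spec hne2
          rcases Finset.mem_insert.mp hmm with h | h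
          · exact h
          · have h1 := hub _ h
            have h2 := hmg _ (Finset.mem_insert_self _ _)
            omega
        rw [hmax, Finset.erase_insert hnotin]

lemma card_R0_eq {n r m : ℕ} (hm : 1 ≤ m) : (R0 n r m).card = hcount n r m := by
  rw [hcount_eq_L0]
  apply Finset.card_bij' (i := fun e _ => e.image (mir n)) (j := fun e _ => e.image (mir n))
  · intro e he
    have hsub := (Finset.mem_powersetCard.mp (Finset.mem_filter.mp he).1).1
    exact mir_invol hsub
  · intro e he
    have hsub := (Finset.mem_powersetCard.mp (Finset.mem_filter.mp he).1).1
    exact mir_invol hsub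
  · intro e he
    simp only [R0, Finset.mem_filter, Finset.mem_powersetCard] at he
    obtain ⟨⟨hsub, hcard⟩, hLB⟩ := he
    simp only [L0, Finset.mem_filter, Finset.mem_powersetCard]
    exact ⟨⟨mir_image_subset hsub, by rw [mir_card hsub, hcard]⟩, hLB⟩
  · intro e he
    simp only [L0, Finset.mem_filter, Finset.mem_powersetCard] at he
    obtain ⟨⟨hsub, hcard⟩, hLB⟩ := he
    simp only [R0, Finset.mem_filter, Finset.mem_powersetCard]
    refine ⟨⟨mir_image_subset hsub, by rw [mir_card hsub, hcard]⟩, ?_⟩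
    rw [mir_invol hsub]
    exact hLB

lemma card_Dom_eq {n m r : ℕ} (hev : Even n) (hm : 1 ≤ m) (hmr : m ≤ r) (hr : 1 ≤ r) :
    (Dom n m r).card = 2 * hcount n r m + hcount n (r - 1) m := by
  rw [dom_partition hm hmr, card_Wdom_eq_Ldom hm hmr, card_Ldom_eq hm hmr,
    card_Mdom_eq_M0 hm hmr, card_M0_eq hev hm hmr hr]
  ring

/-! ### the transversal -/

lemma image_f_card {n s : ℕ} {f : ℕ → ℕ} (hmono : StrictMonoOn f ↑(Finset.Icc 1 s))
    {a b : ℕ} (ha : 1 ≤ a) (hb : b ≤ s) (hab : a ≤ b) :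
    ((Finset.Icc a b).image f).card = b - a + 1 := by
  rw [Finset.card_image_of_injOn, Nat.card_Icc]
  · omega
  · apply Set.InjOn.mono _ hmono.injOn
    intro v hv
    simp only [coe_Icc, Set.mem_Icc] at hv ⊢
    omega

lemma image_f_mem_powersetCard {n r s : ℕ} {f : ℕ → ℕ}
    (hmono : StrictMonoOn f ↑(Finset.Icc 1 s))
    (hmaps : ∀ v ∈ Finset.Icc 1 s, f v ∈ Finset.Icc 1 n)
    {a b : ℕ} (ha : 1 ≤ a) (hb : b ≤ s) (hab : a ≤ b) (hcard : b - a + 1 = r) :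
    (Finset.Icc a b).image f ∈ (Finset.Icc 1 n).powersetCard r := by
  rw [Finset.mem_powersetCard]
  constructor
  · intro y hy
    obtain ⟨v, hv, rfl⟩ := Finset.mem_image.mp hy
    rw [Finset.mem_Icc] at hv
    exact hmaps v (Finset.mem_Icc.mpr ⟨by omega, by omega⟩)
  · rw [image_f_card hmono ha hb hab (n := n)]
    exact hcard

lemma image_f_inter {n s : ℕ} {f : ℕ → ℕ} (hmono : StrictMonoOn f ↑(Finset.Icc 1 s))
    (hmaps : ∀ v ∈ Finset.Icc 1 s, f v ∈ Finset.Icc 1 n) {a b t : ℕ}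
    (ha : 1 ≤ a) (hb : b ≤ s) (hat : a ≤ t) (htb : t ≤ b) :
    ((Finset.Icc a b).image f) ∩ Finset.Icc 1 (f t) = (Finset.Icc a t).image f := by
  ext y
  simp only [Finset.mem_inter, Finset.mem_image, Finset.mem_Icc]
  constructor
  · rintro ⟨⟨v, ⟨hv1, hv2⟩, rfl⟩, h1, h2⟩
    refine ⟨v, ⟨hv1, ?_⟩, rfl⟩
    by_contra hlt
    have : f t < f v := hmono (by simp only [coe_Icc, Set.mem_Icc]; omega)
      (by simp only [coe_Icc, Set.mem_Icc]; omega) (by omega)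
    omega
  · rintro ⟨v, ⟨hv1, hv2⟩, rfl⟩
    have hfv : f v ∈ Finset.Icc 1 n := hmaps v (Finset.mem_Icc.mpr ⟨by omega, by omega⟩)
    rw [Finset.mem_Icc] at hfv
    have hle : f v ≤ f t := by
      rcases eq_or_lt_of_le hv2 with rfl | h
      · exact le_refl _
      · exact le_of_lt (hmono (by simp only [coe_Icc, Set.mem_Icc]; omega)
          (by simp only [coe_Icc, Set.mem_Icc]; omega) h)
    exact ⟨⟨v, ⟨hv1, by omega⟩, rfl⟩, hfv.1, hle⟩

lemma Tset_covers {n r s m : ℕ} (hm1 : 1 ≤ m) (hmeq : m = s - r + 1) (hr : 1 ≤ r)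
    (hrs : r ≤ s) (hmr : m ≤ r) :
    ∀ C, IsCopy n s (loosePathEdges r s) C →
      ∃ e ∈ C, e ∈ L0 n r m ∪ M0 n r m ∪ R0 n r m := by
  rintro C ⟨f, hmono, hmaps, rfl⟩
  have hs' : s = r + m - 1 := by omega
  have hmmem : m ∈ Finset.Icc 1 s := Finset.mem_Icc.mpr ⟨hm1, by omega⟩
  have hrmem : r ∈ Finset.Icc 1 s := Finset.mem_Icc.mpr ⟨hr, hrs⟩
  have hfm := Finset.mem_Icc.mp (hmaps m hmmem)
  have hfr := Finset.mem_Icc.mp (hmaps r hrmem)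
  have hfmr : f m ≤ f r := by
    rcases eq_or_lt_of_le hmr with rfl | h
    · exact le_refl _
    · exact le_of_lt (hmono (by exact_mod_cast hmmem) (by exact_mod_cast hrmem) h)
  have he1C : (Finset.Icc 1 r).image f ∈ (loosePathEdges r s).image (fun e => e.image f) :=
    Finset.mem_image_of_mem _ (Finset.mem_insert_self _ _)
  have he2C : (Finset.Icc (s - r + 1) s).image f ∈
      (loosePathEdges r s).image (fun e => e.image f) :=
    Finset.mem_image_of_mem _ (Finset.mem_insert_of_mem (Finset.mem_singleton_self _))
  have he1p : (Finset.Icc 1 r).image f ∈ (Finset.Icc 1 n).powersetCard r :=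
    image_f_mem_powersetCard hmono hmaps (le_refl 1) hrs (by omega) (by omega)
  have he1sub : (Finset.Icc 1 r).image f ⊆ Finset.Icc 1 n :=
    (Finset.mem_powersetCard.mp he1p).1
  have hcnt1 : (((Finset.Icc 1 r).image f) ∩ Finset.Icc 1 (f m)).card = m := by
    rw [image_f_inter hmono hmaps (le_refl 1) hrs hm1 hmr]
    rw [image_f_card hmono (le_refl 1) (by omega) hm1 (n := n)]
    omega
  have hfm_mem : f m ∈ (Finset.Icc 1 r).image f :=
    Finset.mem_image_of_mem _ (Finset.mem_Icc.mpr ⟨hm1, hmr⟩)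
  have hall_le : ∀ y ∈ (Finset.Icc 1 r).image f, y ≤ f r := by
    intro y hy
    obtain ⟨v, hv, rfl⟩ := Finset.mem_image.mp hy
    rw [Finset.mem_Icc] at hv
    rcases eq_or_lt_of_le hv.2 with rfl | h
    · exact le_refl _
    · exact le_of_lt (hmono (by simp only [coe_Icc, Set.mem_Icc]; omega)
        (by exact_mod_cast hrmem) h)
  rcases Nat.lt_or_ge (f m + f r) (n + 1) with hcase | hcase
  · -- f m + f r ≤ n : first edge is left-biased
    refine ⟨(Finset.Icc 1 r).image f, he1C, ?_⟩
    refine Finset.mem_union_left _ (Finset.mem_union_left _ ?_)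
    simp only [L0, Finset.mem_filter]
    refine ⟨he1p, ?_⟩
    rw [leftBiased_iff_mybias hm1 he1sub]
    exact ⟨f m, hfm_mem, hcnt1, fun y hy => by have := hall_le y hy; omega⟩
  rcases Nat.lt_or_ge (f m + f r) (n + 2) with hcase2 | hcase2
  · -- f m + f r = n + 1 : first edge is in the middle class
    refine ⟨(Finset.Icc 1 r).image f, he1C, ?_⟩
    refine Finset.mem_union_left _ (Finset.mem_union_right _ ?_)
    simp only [M0, Finset.mem_filter]
    refine ⟨he1p, ⟨f m, hfm_mem, hcnt1, fun y hy => by have := hall_le y hy; omega⟩, ?_⟩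
    intro hLB
    obtain ⟨w, hw, hcw, hubw⟩ := (leftBiased_iff_mybias hm1 he1sub).mp hLB
    obtain ⟨t₀, ht₀, rfl⟩ := Finset.mem_image.mp hw
    rw [Finset.mem_Icc] at ht₀
    have hcnt₀ : (((Finset.Icc 1 r).image f) ∩ Finset.Icc 1 (f t₀)).card = t₀ := by
      rw [image_f_inter hmono hmaps (le_refl 1) hrs ht₀.1 ht₀.2]
      rw [image_f_card hmono (le_refl 1) (by omega) ht₀.1 (n := n)]
      omega
    have ht₀m : t₀ = m := by omega
    subst ht₀m
    have := hubw (f r) (Finset.mem_image_of_mem _ (Finset.mem_Icc.mpr ⟨hr, le_refl r⟩))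
    omega
  · -- f m + f r ≥ n + 2 : last edge is right-biased
    refine ⟨(Finset.Icc (s - r + 1) s).image f, he2C, Finset.mem_union_right _ ?_⟩
    simp only [R0, Finset.mem_filter]
    have hm1s : 1 ≤ s - r + 1 := by omega
    have he2p : (Finset.Icc (s - r + 1) s).image f ∈ (Finset.Icc 1 n).powersetCard r :=
      image_f_mem_powersetCard hmono hmaps hm1s (le_refl s) (by omega) (by omega)
    refine ⟨he2p, ?_⟩
    set S := ((Finset.Icc (s - r + 1) s).image f).image (mir n) with hS
    have hSsub : S ⊆ Finset.Icc 1 n :=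
      mir_image_subset (Finset.mem_powersetCard.mp he2p).1
    have hmem_iff : ∀ y, y ∈ S ↔ ∃ v, (s - r + 1 ≤ v ∧ v ≤ s) ∧ mir n (f v) = y := by
      intro y
      rw [hS, Finset.image_image]
      simp only [Finset.mem_image, Finset.mem_Icc, Function.comp_apply]
    rw [leftBiased_iff_mybias hm1 hSsub]
    have hrge : s - r + 1 ≤ r := by omega
    have hur : mir n (f r) ∈ S := (hmem_iff _).mpr ⟨r, ⟨hrge, hrs⟩, rfl⟩
    refine ⟨mir n (f r), hur, ?_, ?_⟩
    · -- count
      have hinter : S ∩ Finset.Icc 1 (mir n (f r)) = (Finset.Icc r s).image (mir n ∘ f) := by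
        ext y
        simp only [Finset.mem_inter, Finset.mem_image, Finset.mem_Icc, Function.comp_apply]
        constructor
        · rintro ⟨hyS, hy1, hy2⟩
          obtain ⟨v, ⟨hv1, hv2⟩, rfl⟩ := (hmem_iff y).mp hyS
          refine ⟨v, ⟨?_, hv2⟩, rfl⟩
          -- mir n (f v) ≤ mir n (f r) implies f r ≤ f v implies r ≤ v
          have hfv := Finset.mem_Icc.mp (hmaps v (Finset.mem_Icc.mpr ⟨by omega, hv2⟩))
          have hfrv : f r ≤ f v := by
            rw [mir, mir] at hy2
            omega
          by_contra hlt
          have : f v < f r := hmono (by simp only [coe_Icc, Set.mem_Icc]; omega)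
            (by exact_mod_cast hrmem) (by omega)
          omega
        · rintro ⟨v, ⟨hv1, hv2⟩, rfl⟩
          have hfv := Finset.mem_Icc.mp (hmaps v (Finset.mem_Icc.mpr ⟨by omega, hv2⟩))
          have hfrv : f r ≤ f v := by
            rcases eq_or_lt_of_le hv1 with rfl | h
            · exact le_refl _
            · exact le_of_lt (hmono (by exact_mod_cast hrmem)
                (by simp only [coe_Icc, Set.mem_Icc]; omega) h)
          refine ⟨(hmem_iff _).mpr ⟨v, ⟨by omega, hv2⟩, rfl⟩, ?_, ?_⟩
          · rw [mir]; omega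
          · rw [mir, mir]; omega
      rw [hinter, Finset.card_image_of_injOn, Nat.card_Icc]
      · omega
      · intro v hv v' hv' hvv'
        simp only [coe_Icc, Set.mem_Icc] at hv hv'
        simp only [Function.comp_apply, mir] at hvv'
        have h1 := Finset.mem_Icc.mp (hmaps v (Finset.mem_Icc.mpr ⟨by omega, hv.2⟩))
        have h2 := Finset.mem_Icc.mp (hmaps v' (Finset.mem_Icc.mpr ⟨by omega, hv'.2⟩))
        have : f v = f v' := by omega
        exact hmono.injOn (by simp only [coe_Icc, Set.mem_Icc]; omega)
          (by simp only [coe_Icc, Set.mem_Icc]; omega) this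
    · -- all sums small
      intro y hy
      obtain ⟨v, ⟨hv1, hv2⟩, rfl⟩ := (hmem_iff y).mp hy
      have hfv := Finset.mem_Icc.mp (hmaps v (Finset.mem_Icc.mpr ⟨by omega, hv2⟩))
      have hfmv : f m ≤ f v := by
        rcases eq_or_lt_of_le (show m ≤ v by omega) with heq | h
        · rw [heq]
        · exact le_of_lt (hmono (by exact_mod_cast hmmem)
            (by simp only [coe_Icc, Set.mem_Icc]; omega) h)
      rw [mir, mir]
      omega

lemma Tset_transversal {n r s m : ℕ} (hm1 : 1 ≤ m) (hmeq : m = s - r + 1) (hr : 1 ≤ r)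
    (hrs : r ≤ s) (hmr : m ≤ r) :
    IsTransversal n r s (loosePathEdges r s) (L0 n r m ∪ M0 n r m ∪ R0 n r m) := by
  constructor
  · apply Finset.union_subset
    · apply Finset.union_subset
      · exact Finset.filter_subset _ _
      · exact Finset.filter_subset _ _
    · exact Finset.filter_subset _ _
  · exact Tset_covers hm1 hmeq hr hrs hmr

lemma Tset_card {n r m : ℕ} (hev : Even n) (hm : 1 ≤ m) (hmr : m ≤ r) (hr : 1 ≤ r) :
    (L0 n r m ∪ M0 n r m ∪ R0 n r m).card = 2 * hcount n r m + hcount n (r - 1) m := by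
  have hLM : Disjoint (L0 n r m) (M0 n r m) := by
    rw [Finset.disjoint_left]
    intro e he1 he2
    exact ((Finset.mem_filter.mp he2).2).2 (Finset.mem_filter.mp he1).2
  have hLR : Disjoint (L0 n r m) (R0 n r m) := by
    rw [Finset.disjoint_left]
    intro e he1 he2
    have hsub := (Finset.mem_powersetCard.mp (Finset.mem_filter.mp he1).1).1
    obtain ⟨u, hu, hcnt, hub⟩ :=
      (leftBiased_iff_mybias hm hsub).mp (Finset.mem_filter.mp he1).2
    obtain ⟨u', hu', hcnt', hub'⟩ :=
      (leftBiased_iff_mybias hm (mir_image_subset hsub)).mp (Finset.mem_filter.mp he2).2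
    obtain ⟨z₀, hz₀, rfl⟩ := Finset.mem_image.mp hu'
    have h1 := hub' (mir n u) (Finset.mem_image_of_mem _ hu)
    have h2 := hub z₀ hz₀
    have hb1 := Finset.mem_Icc.mp (hsub hu)
    have hb2 := Finset.mem_Icc.mp (hsub hz₀)
    rw [mir, mir] at h1
    omega
  have hMR : Disjoint (M0 n r m) (R0 n r m) := by
    rw [Finset.disjoint_left]
    intro e he1 he2
    have hsub := (Finset.mem_powersetCard.mp (Finset.mem_filter.mp he1).1).1
    obtain ⟨u, hu, hcnt, hub⟩ := ((Finset.mem_filter.mp he1).2).1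
    obtain ⟨u', hu', hcnt', hub'⟩ :=
      (leftBiased_iff_mybias hm (mir_image_subset hsub)).mp (Finset.mem_filter.mp he2).2
    obtain ⟨z₀, hz₀, rfl⟩ := Finset.mem_image.mp hu'
    have h1 := hub' (mir n u) (Finset.mem_image_of_mem _ hu)
    have h2 := hub z₀ hz₀
    have hb1 := Finset.mem_Icc.mp (hsub hu)
    have hb2 := Finset.mem_Icc.mp (hsub hz₀)
    rw [mir, mir] at h1
    omega
  rw [Finset.card_union_of_disjoint, Finset.card_union_of_disjoint hLM, card_M0_eq hev hm hmr hr,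
    card_R0_eq hm, ← hcount_eq_L0]
  · ring
  · rw [Finset.disjoint_union_left]
    exact ⟨hLR, hMR⟩

/-! ### general inequalities and the final assembly -/

lemma packing_empty {n s : ℕ} {E : Finset (Finset ℕ)} : IsPacking n s E ∅ :=
  ⟨fun C hC => absurd hC (Finset.notMem_empty C),
   fun C hC => absurd hC (Finset.notMem_empty C)⟩

lemma transversal_full {n r s : ℕ} {E : Finset (Finset ℕ)}
    (hE : ∀ e₀ ∈ E, e₀ ⊆ Finset.Icc 1 s ∧ e₀.card = r) (hEne : E.Nonempty) :
    IsTransversal n r s E ((Finset.Icc 1 n).powersetCard r) :=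
  ⟨Finset.Subset.refl _, fun C hC => copy_has_edge hE hEne hC⟩

lemma nu_le_tau {n r s : ℕ} {E : Finset (Finset ℕ)}
    (hE : ∀ e₀ ∈ E, e₀ ⊆ Finset.Icc 1 s ∧ e₀.card = r) (hEne : E.Nonempty) :
    nu n s E ≤ tau n r s E := by
  have hTne : {k | ∃ T : Finset (Finset ℕ), IsTransversal n r s E T ∧ T.card = k}.Nonempty :=
    ⟨_, _, transversal_full hE hEne, rfl⟩
  have hmem := Nat.sInf_mem hTne
  obtain ⟨T, hT, hTc⟩ := hmem
  have hne : ({k | ∃ P : Finset (Finset (Finset ℕ)), IsPacking n s E P ∧ P.card = k} :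
      Set ℕ).Nonempty := ⟨0, ∅, packing_empty, Finset.card_empty⟩
  apply csSup_le hne
  rintro k ⟨P, hP, rfl⟩
  calc P.card ≤ T.card := packing_card_le_s2 hE hP hT.2
  _ = tau n r s E := hTc

lemma loose_sub_path {r s : ℕ} (hr : 1 ≤ r) (hrs : r ≤ s) :
    loosePathEdges r s ⊆ pathEdges r s := by
  intro e he
  rw [loosePathEdges, Finset.mem_insert, Finset.mem_singleton] at he
  rw [pathEdges, Finset.mem_image]
  rcases he with rfl | rfl
  · exact ⟨1, Finset.mem_Icc.mpr ⟨le_refl 1, by omega⟩, by congr 1; omega⟩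
  · exact ⟨s - r + 1, Finset.mem_Icc.mpr ⟨by omega, le_refl _⟩, by congr 1; omega⟩

lemma loose_transversal_is_path_transversal {n r s : ℕ} (hr : 1 ≤ r) (hrs : r ≤ s)
    {T : Finset (Finset ℕ)} (hT : IsTransversal n r s (loosePathEdges r s) T) :
    IsTransversal n r s (pathEdges r s) T := by
  refine ⟨hT.1, ?_⟩
  rintro C ⟨f, h1, h2, rfl⟩
  obtain ⟨e, he, heT⟩ :=
    hT.2 ((loosePathEdges r s).image (fun e => e.image f)) ⟨f, h1, h2, rfl⟩
  refine ⟨e, ?_, heT⟩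
  obtain ⟨e₀, he₀, rfl⟩ := Finset.mem_image.mp he
  exact Finset.mem_image_of_mem _ (loose_sub_path hr hrs he₀)

lemma tau_path_le_tau_loose {n r s : ℕ} (hr : 1 ≤ r) (hrs : r ≤ s) :
    tau n r s (pathEdges r s) ≤ tau n r s (loosePathEdges r s) := by
  have hTne : {k | ∃ T : Finset (Finset ℕ),
      IsTransversal n r s (loosePathEdges r s) T ∧ T.card = k}.Nonempty :=
    ⟨_, _, transversal_full (fun e he => loosePathEdges_spec hr hrs he)
      loosePathEdges_nonempty, rfl⟩
  obtain ⟨T, hT, hTc⟩ := Nat.sInf_mem hTne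
  calc tau n r s (pathEdges r s) ≤ T.card :=
        Nat.sInf_le ⟨T, loose_transversal_is_path_transversal hr hrs hT, rfl⟩
  _ = tau n r s (loosePathEdges r s) := hTc

lemma nu_path_le_nu_loose {n r s : ℕ} (hr : 1 ≤ r) (hrs : r ≤ s) :
    nu n s (pathEdges r s) ≤ nu n s (loosePathEdges r s) := by
  classical
  have hne : ({k | ∃ P : Finset (Finset (Finset ℕ)),
      IsPacking n s (pathEdges r s) P ∧ P.card = k} : Set ℕ).Nonempty :=
    ⟨0, ∅, packing_empty, Finset.card_empty⟩
  apply csSup_le hne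
  rintro k ⟨P, hP, rfl⟩
  -- build a loose packing of the same size
  set F : Finset (Finset ℕ) → (ℕ → ℕ) := fun C =>
    if h : IsCopy n s (pathEdges r s) C then h.choose else id with hF
  have hFspec : ∀ C ∈ P, StrictMonoOn (F C) ↑(Finset.Icc 1 s) ∧
      (∀ v ∈ Finset.Icc 1 s, F C v ∈ Finset.Icc 1 n) ∧
      C = (pathEdges r s).image (fun e => e.image (F C)) := by
    intro C hC
    have h := hP.1 C hC
    have : F C = h.choose := by rw [hF]; exact dif_pos h
    rw [this]
    exact h.choose_spec
  set sub : Finset (Finset ℕ) → Finset (Finset ℕ) := fun C =>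
    (loosePathEdges r s).image (fun e => e.image (F C)) with hsubdef
  have hsub_copy : ∀ C ∈ P, IsCopy n s (loosePathEdges r s) (sub C) := by
    intro C hC
    obtain ⟨h1, h2, h3⟩ := hFspec C hC
    exact ⟨F C, h1, h2, rfl⟩
  have hsub_sub : ∀ C ∈ P, sub C ⊆ C := by
    intro C hC
    obtain ⟨h1, h2, h3⟩ := hFspec C hC
    intro x hx
    simp only [hsubdef] at hx
    obtain ⟨e₀, he₀, rfl⟩ := Finset.mem_image.mp hx
    have hmem : e₀.image (F C) ∈ (pathEdges r s).image (fun e => e.image (F C)) :=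
      Finset.mem_image.mpr ⟨e₀, loose_sub_path hr hrs he₀, rfl⟩
    rwa [← h3] at hmem
  have hsub_ne : ∀ C, (sub C).Nonempty :=
    fun C => Finset.Nonempty.image loosePathEdges_nonempty _
  have hinj : ∀ C ∈ P, ∀ C' ∈ P, sub C = sub C' → C = C' := by
    intro C hC C' hC' h
    by_contra hne
    obtain ⟨x, hx⟩ := hsub_ne C
    have hx1 : x ∈ C := hsub_sub C hC hx
    have hx2 : x ∈ C' := hsub_sub C' hC' (h ▸ hx)
    exact Finset.disjoint_left.mp (hP.2 C hC C' hC' hne) hx1 hx2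
  have hP' : IsPacking n s (loosePathEdges r s) (P.image sub) := by
    constructor
    · intro C hC
      obtain ⟨D, hD, rfl⟩ := Finset.mem_image.mp hC
      exact hsub_copy D hD
    · intro C hC C' hC' hne
      obtain ⟨D, hD, rfl⟩ := Finset.mem_image.mp hC
      obtain ⟨D', hD', rfl⟩ := Finset.mem_image.mp hC'
      have hDD' : D ≠ D' := fun h => hne (by rw [h])
      exact Disjoint.mono (hsub_sub D hD) (hsub_sub D' hD')
        (hP.2 D hD D' hD' hDD')
  have hcard : (P.image sub).card = P.card :=
    Finset.card_image_of_injOn (fun C hC C' hC' h => hinj C hC C' hC' h)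
  apply le_csSup (packing_sizes_bddAbove
    (fun e he => loosePathEdges_spec hr hrs he) loosePathEdges_nonempty)
  exact ⟨P.image sub, hP', hcard⟩

end Aux

/-- For even `n > 0`, `2 ≤ r ≤ s ≤ 2r-1` and `m = s-r+1`, all four of
`ν(n,P)`, `ν(n,LP)`, `τ(n,P)`, `τ(n,LP)` equal `2·h(n,r,m) + h(n,r-1,m)`. -/
theorem stmt2 (n r s m : ℕ) (hn : 0 < n) (hev : Even n)
    (hr : 2 ≤ r) (hrs : r ≤ s) (hs : s ≤ 2 * r - 1) (hm : m = s - r + 1) :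
    nu n s (pathEdges r s) = 2 * hcount n r m + hcount n (r - 1) m ∧
    nu n s (loosePathEdges r s) = 2 * hcount n r m + hcount n (r - 1) m ∧
    tau n r s (pathEdges r s) = 2 * hcount n r m + hcount n (r - 1) m ∧
    tau n r s (loosePathEdges r s) = 2 * hcount n r m + hcount n (r - 1) m := by
  have hm1 : 1 ≤ m := by omega
  have hmr : m ≤ r := by omega
  have hs' : s = r + m - 1 := by omega
  have hr1 : 1 ≤ r := by omega
  have hpspec : ∀ e ∈ pathEdges r s, e ⊆ Finset.Icc 1 s ∧ e.card = r :=
    fun e he => pathEdges_spec hr1 hrs he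
  have hlspec : ∀ e ∈ loosePathEdges r s, e ⊆ Finset.Icc 1 s ∧ e.card = r :=
    fun e he => loosePathEdges_spec hr1 hrs he
  set N := 2 * hcount n r m + hcount n (r - 1) m with hN
  have hNpack : N = (Pack n m r).card := by
    rw [card_Pack hm1 hmr, card_Dom_eq hev hm1 hmr hr1]
  have key1 : N ≤ nu n s (pathEdges r s) := by
    rw [hNpack]
    exact le_csSup (packing_sizes_bddAbove hpspec (pathEdges_nonempty hrs))
      ⟨Pack n m r, pack_isPacking hm1 hmr hs', rfl⟩
  have key2 : tau n r s (loosePathEdges r s) ≤ N := by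
    calc tau n r s (loosePathEdges r s) ≤ (L0 n r m ∪ M0 n r m ∪ R0 n r m).card :=
          Nat.sInf_le ⟨_, Tset_transversal hm1 hm hr1 hrs hmr, rfl⟩
    _ = N := Tset_card hev hm1 hmr hr1
  have key3 : nu n s (pathEdges r s) ≤ tau n r s (pathEdges r s) :=
    nu_le_tau hpspec (pathEdges_nonempty hrs)
  have key4 : tau n r s (pathEdges r s) ≤ tau n r s (loosePathEdges r s) :=
    tau_path_le_tau_loose hr1 hrs
  have key5 : nu n s (loosePathEdges r s) ≤ tau n r s (loosePathEdges r s) :=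
    nu_le_tau hlspec loosePathEdges_nonempty
  have key6 : nu n s (pathEdges r s) ≤ nu n s (loosePathEdges r s) :=
    nu_path_le_nu_loose hr1 hrs
  refine ⟨?_, ?_, ?_, ?_⟩ <;> omega
end
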